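/- arXiv:2005.13898 — 6 statements merged into one kernel-verified Lean document; each statement's English description precedes it below -/
import Mathlib

section
/- For every integer n > K, the expected conditional CRI length satisfies the closed-form expression L_n = 1 - C(n,K) · ∑_{j=1}^{n-K} [2 · j · (-1)^j · C(n-K, j)] / [(j+K) · (1 - p^{j+K} - (1-p)^{j+K})]. -/
open Finset


-- binomial theorem form
lemma bta_binom_sum (a b : ℝ) (h : a + b = 1) (n : ℕ) :
    ∑ i ∈ Finset.range (n+1), (n.choose i : ℝ) * a^i * b^(n-i) = 1 := by
  have := add_pow a b n
  rw [h, one_pow] at this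
  rw [this]
  exact Finset.sum_congr rfl (fun i _ => by ring)

-- moment identity
lemma bta_binom_moment (a b : ℝ) (h : a + b = 1) (n m : ℕ) :
    ∑ i ∈ Finset.range (n+1), (n.choose i : ℝ) * a^i * b^(n-i) * (i.choose m : ℝ)
      = (n.choose m : ℝ) * a^m := by
  rcases le_or_gt m n with hm | hm
  · rw [Finset.range_eq_Ico, ← Finset.sum_Ico_consecutive _ (Nat.zero_le m) (by omega : m ≤ n+1)]
    have h1 : ∑ i ∈ Finset.Ico 0 m, (n.choose i : ℝ) * a^i * b^(n-i) * (i.choose m : ℝ) = 0 := by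
      apply Finset.sum_eq_zero
      intro i hi
      simp only [Finset.mem_Ico] at hi
      rw [Nat.choose_eq_zero_of_lt hi.2]
      simp
    rw [h1, zero_add, Finset.sum_Ico_eq_sum_range]
    have h2 : ∀ t ∈ Finset.range (n+1-m),
        (n.choose (m+t) : ℝ) * a^(m+t) * b^(n-(m+t)) * ((m+t).choose m : ℝ)
        = (n.choose m : ℝ) * a^m * ((n-m).choose t : ℝ) * a^t * b^((n-m)-t) := by
      intro t ht
      simp only [Finset.mem_range] at ht
      have hmt : m + t ≤ n := by omega
      have key : n.choose (m+t) * (m+t).choose m = n.choose m * (n-m).choose t := by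
        have := Nat.choose_mul (n := n) (Nat.le_add_right m t)
        simpa using this
      have hcast : (n.choose (m+t) : ℝ) * ((m+t).choose m : ℝ)
          = (n.choose m : ℝ) * ((n-m).choose t : ℝ) := by
        exact_mod_cast congrArg (Nat.cast : ℕ → ℝ) key
      have hsub : n - (m+t) = (n-m) - t := by omega
      rw [hsub, pow_add]
      calc (n.choose (m+t) : ℝ) * (a^m * a^t) * b^((n-m)-t) * ((m+t).choose m : ℝ)
          = ((n.choose (m+t) : ℝ) * ((m+t).choose m : ℝ)) * (a^m * a^t * b^((n-m)-t)) := by ring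
        _ = ((n.choose m : ℝ) * ((n-m).choose t : ℝ)) * (a^m * a^t * b^((n-m)-t)) := by rw [hcast]
        _ = (n.choose m : ℝ) * a^m * ((n-m).choose t : ℝ) * a^t * b^((n-m)-t) := by ring
    rw [Finset.sum_congr rfl h2]
    have h3 : n + 1 - m = (n - m) + 1 := by omega
    rw [h3]
    have h4 : ∑ t ∈ Finset.range ((n-m)+1),
        (n.choose m : ℝ) * a^m * ((n-m).choose t : ℝ) * a^t * b^((n-m)-t)
        = (n.choose m : ℝ) * a^m * ∑ t ∈ Finset.range ((n-m)+1),
            ((n-m).choose t : ℝ) * a^t * b^((n-m)-t) := by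
      rw [Finset.mul_sum]
      exact Finset.sum_congr rfl (fun t _ => by ring)
    rw [h4, bta_binom_sum a b h, mul_one]
  · have h1 : ∀ i ∈ Finset.range (n+1),
        (n.choose i : ℝ) * a^i * b^(n-i) * (i.choose m : ℝ) = 0 := by
      intro i hi
      simp only [Finset.mem_range] at hi
      rw [Nat.choose_eq_zero_of_lt (show i < m by omega)]
      simp
    rw [Finset.sum_eq_zero h1, Nat.choose_eq_zero_of_lt hm]
    simp

lemma bta_coeff (K n t : ℕ) (h : K ≤ n) :
    (K+t+1) * ((K+t).choose K) * (n.choose (K+1+t)) = (t+1) * (n.choose K) * ((n-K).choose (t+1)) := by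
  rcases le_or_gt (K+1+t) n with hle | hlt
  · have h1 : n.choose (K+t+1) * (K+t+1).choose K = n.choose K * (n-K).choose (t+1) := by
      have := Nat.choose_mul (n := n) (show K ≤ K+t+1 by omega)
      simpa [show K+t+1-K = t+1 by omega] using this
    have h2 : (K+t+1) * (K+t).choose t = (K+t+1).choose (t+1) * (t+1) :=
      Nat.add_one_mul_choose_eq (K+t) t
    have h3 : (K+t).choose t = (K+t).choose K := by
      have := Nat.choose_symm (show K ≤ K+t by omega)
      simpa [show K+t-K = t by omega] using this
    have h4 : (K+t+1).choose (t+1) = (K+t+1).choose K := by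
      have := Nat.choose_symm (show K ≤ K+t+1 by omega)
      simpa [show K+t+1-K = t+1 by omega] using this
    have e : K+1+t = K+t+1 := by omega
    calc (K+t+1) * (K+t).choose K * (n.choose (K+1+t))
        = ((K+t+1) * (K+t).choose t) * (n.choose (K+t+1)) := by rw [h3, e]
      _ = ((K+t+1).choose (t+1) * (t+1)) * (n.choose (K+t+1)) := by rw [h2]
      _ = (t+1) * (n.choose (K+t+1) * (K+t+1).choose K) := by rw [h4]; ring
      _ = (t+1) * (n.choose K * (n-K).choose (t+1)) := by rw [h1]
      _ = _ := by ring
  · rw [Nat.choose_eq_zero_of_lt hlt, Nat.choose_eq_zero_of_lt (show n-K < t+1 by omega)]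
    simp

lemma bta_binom_moment' (a b : ℝ) (h : a + b = 1) (n m : ℕ) :
    ∑ i ∈ Finset.range (n+1), (n.choose i : ℝ) * a^i * b^(n-i) * ((n-i).choose m : ℝ)
      = (n.choose m : ℝ) * b^m := by
  have hr := Finset.sum_range_reflect
    (fun i => (n.choose i : ℝ) * a^i * b^(n-i) * ((n-i).choose m : ℝ)) (n+1)
  simp only [Nat.add_sub_cancel] at hr
  rw [← hr]
  have : ∀ j ∈ Finset.range (n+1),
      (n.choose (n-j) : ℝ) * a^(n-j) * b^(n-(n-j)) * ((n-(n-j)).choose m : ℝ)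
      = (n.choose j : ℝ) * b^j * a^(n-j) * (j.choose m : ℝ) := by
    intro j hj
    simp only [Finset.mem_range] at hj
    rw [Nat.choose_symm (by omega), show n-(n-j) = j by omega]
    ring
  rw [Finset.sum_congr rfl this]
  have := bta_binom_moment b a (by linarith) n m
  rw [← this]


lemma bta_alt_zero (K n : ℕ) (h : K < n) :
    ∑ t ∈ Finset.range (n-K+1), (-1:ℝ)^t * (((K+t).choose K : ℕ) : ℝ) * ((n.choose (K+t) : ℕ) : ℝ) = 0 := by
  have key : ∀ t ∈ Finset.range (n-K+1),
      (-1:ℝ)^t * (((K+t).choose K : ℕ) : ℝ) * ((n.choose (K+t) : ℕ) : ℝ)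
      = (n.choose K : ℝ) * ((-1:ℝ)^t * (((n-K).choose t : ℕ) : ℝ)) := by
    intro t ht
    simp only [Finset.mem_range] at ht
    have hkt : K + t ≤ n := by omega
    have key : n.choose (K+t) * (K+t).choose K = n.choose K * (n-K).choose t := by
      have := Nat.choose_mul (n := n) (Nat.le_add_right K t)
      simpa using this
    have hcast : ((n.choose (K+t) : ℕ) : ℝ) * (((K+t).choose K : ℕ) : ℝ)
        = ((n.choose K : ℕ) : ℝ) * (((n-K).choose t : ℕ) : ℝ) := by
      exact_mod_cast congrArg (Nat.cast : ℕ → ℝ) key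
    calc (-1:ℝ)^t * (((K+t).choose K : ℕ) : ℝ) * ((n.choose (K+t) : ℕ) : ℝ)
        = ((n.choose (K+t) :ℕ) : ℝ) * (((K+t).choose K:ℕ) : ℝ) * (-1:ℝ)^t := by ring
      _ = ((n.choose K:ℕ) : ℝ) * (((n-K).choose t:ℕ) : ℝ) * (-1:ℝ)^t := by rw [hcast]
      _ = _ := by ring
  rw [Finset.sum_congr rfl key, ← Finset.mul_sum]
  have h2 : ∑ t ∈ Finset.range (n-K+1), (-1:ℝ)^t * (((n-K).choose t : ℕ) : ℝ) = 0 := by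
    have := add_pow (-1 : ℝ) 1 (n - K)
    simp only [one_pow, mul_one] at this
    rw [show (-1:ℝ) + 1 = 0 by ring, zero_pow (by omega : n - K ≠ 0)] at this
    rw [← this]
  rw [h2, mul_zero]

lemma bta_S (K n : ℕ) (h : K < n) :
    ∑ t ∈ Finset.range (n-K), (-1:ℝ)^t * (((K+t).choose K : ℕ) : ℝ) * ((n.choose (K+1+t) : ℕ) : ℝ) = 1 := by
  induction n, h using Nat.le_induction with
  | base =>
    simp only [Nat.add_sub_cancel_left, show K + 1 - K = 1 from by omega]
    simp
  | succ n hn ih =>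
    have hps : ∀ t, (n+1).choose (K+1+t) = n.choose (K+t) + n.choose (K+1+t) := by
      intro t
      have : K + 1 + t = (K + t) + 1 := by omega
      rw [this]
      exact Nat.choose_succ_succ n (K+t) ▸ rfl
    have hsplit : ∀ t ∈ Finset.range (n+1-K),
        (-1:ℝ)^t * (((K+t).choose K : ℕ) : ℝ) * (((n+1).choose (K+1+t) : ℕ) : ℝ)
        = (-1:ℝ)^t * (((K+t).choose K : ℕ) : ℝ) * ((n.choose (K+t) : ℕ) : ℝ)
          + (-1:ℝ)^t * (((K+t).choose K : ℕ) : ℝ) * ((n.choose (K+1+t) : ℕ) : ℝ) := by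
      intro t _
      rw [hps t]
      push_cast
      ring
    rw [Finset.sum_congr rfl hsplit, Finset.sum_add_distrib]
    have e1 : n + 1 - K = (n - K) + 1 := by omega
    have hA : ∑ t ∈ Finset.range (n+1-K),
        (-1:ℝ)^t * (((K+t).choose K : ℕ) : ℝ) * ((n.choose (K+t) : ℕ) : ℝ) = 0 := by
      rw [e1]; exact bta_alt_zero K n hn
    have hB : ∑ t ∈ Finset.range (n+1-K),
        (-1:ℝ)^t * (((K+t).choose K : ℕ) : ℝ) * ((n.choose (K+1+t) : ℕ) : ℝ) = 1 := by
      rw [e1, Finset.sum_range_succ, ih, Nat.choose_eq_zero_of_lt (show n < K+1+(n-K) by omega)]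
      simp
    rw [hA, hB, zero_add]

theorem bta_cri_closed_form
    (K : ℕ) (hK : 1 ≤ K) (p : ℝ) (hp0 : 0 < p) (hp1 : p < 1)
    (L : ℕ → ℝ)
    (hL1 : ∀ n, n ≤ K → L n = 1)
    (hL2 : ∀ n, K < n → L n = 1 + ∑ i ∈ Finset.range (n + 1),
        (n.choose i : ℝ) * p ^ i * (1 - p) ^ (n - i) * (L i + L (n - i)))
    (n : ℕ) (hn : K < n) :
    L n = 1 - (n.choose K : ℝ) * ∑ j ∈ Finset.Icc 1 (n - K),
        (2 * (j : ℝ) * (-1 : ℝ) ^ j * ((n - K).choose j : ℝ)) /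
          (((j : ℝ) + (K : ℝ)) * (1 - p ^ (j + K) - (1 - p) ^ (j + K))) := by
  have hq0 : (0:ℝ) < 1 - p := by linarith
  have hpq : p + (1 - p) = 1 := by ring
  have hD : ∀ m : ℕ, 2 ≤ m → 0 < 1 - p^m - (1-p)^m := by
    intro m hm
    have e1 : p^m ≤ p^2 := pow_le_pow_of_le_one hp0.le hp1.le hm
    have e2 : (1-p)^m ≤ (1-p)^2 := pow_le_pow_of_le_one hq0.le (by linarith) hm
    nlinarith [mul_pos hp0 hq0]
  have hDne : ∀ m : ℕ, 2 ≤ m → (1 - p^m - (1-p)^m) ≠ 0 := fun m hm => (hD m hm).ne'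
  set c : ℕ → ℝ := fun t => 2 * (-1:ℝ)^t * (((K+t).choose K : ℕ) : ℝ) / (1 - p^(K+1+t) - (1-p)^(K+1+t)) with hc
  set M : ℕ → ℝ := fun i => 1 + ∑ t ∈ Finset.range (n-K), c t * ((i.choose (K+1+t) : ℕ) : ℝ) with hM
  have hM1 : ∀ i, i ≤ K → M i = 1 := by
    intro i hi
    rw [hM]
    simp only
    rw [Finset.sum_eq_zero, add_zero]
    intro t _
    rw [Nat.choose_eq_zero_of_lt (show i < K+1+t by omega)]
    simp
  have hSum2 : ∀ i, K < i → i ≤ n →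
      ∑ t ∈ Finset.range (n-K), 2 * (-1:ℝ)^t * (((K+t).choose K : ℕ) : ℝ) * ((i.choose (K+1+t) : ℕ) : ℝ) = 2 := by
    intro i h1 h2
    have hsub : Finset.range (i-K) ⊆ Finset.range (n-K) := Finset.range_subset_range.2 (by omega)
    rw [← Finset.sum_subset hsub]
    · have : ∀ t ∈ Finset.range (i-K),
          2 * (-1:ℝ)^t * (((K+t).choose K : ℕ) : ℝ) * ((i.choose (K+1+t) : ℕ) : ℝ)
          = 2 * ((-1:ℝ)^t * (((K+t).choose K : ℕ) : ℝ) * ((i.choose (K+1+t) : ℕ) : ℝ)) := by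
        intro t _; ring
      rw [Finset.sum_congr rfl this, ← Finset.mul_sum, bta_S K i h1, mul_one]
    · intro t _ ht
      simp only [Finset.mem_range, not_lt] at ht
      rw [Nat.choose_eq_zero_of_lt (show i < K+1+t by omega)]
      simp
  have hMfull : ∀ i, K < i → i ≤ n → M i = 1 + ∑ j ∈ Finset.range (i + 1),
      (i.choose j : ℝ) * p ^ j * (1 - p) ^ (i - j) * (M j + M (i - j)) := by
    intro i hKi hin
    have expand : ∀ j ∈ Finset.range (i+1),
        (i.choose j : ℝ) * p ^ j * (1 - p) ^ (i - j) * (M j + M (i - j))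
        = 2 * ((i.choose j : ℝ) * p ^ j * (1 - p) ^ (i - j))
          + ∑ t ∈ Finset.range (n-K), c t *
              ((i.choose j : ℝ) * p ^ j * (1 - p) ^ (i - j) * ((j.choose (K+1+t) : ℕ) : ℝ)
               + (i.choose j : ℝ) * p ^ j * (1 - p) ^ (i - j) * (((i-j).choose (K+1+t) : ℕ) : ℝ)) := by
      intro j _
      rw [hM]
      simp only
      set w : ℝ := (i.choose j : ℝ) * p ^ j * (1 - p) ^ (i - j) with hw
      have e1 : w * (∑ t ∈ Finset.range (n-K), c t * ((j.choose (K+1+t) : ℕ) : ℝ))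
          = ∑ t ∈ Finset.range (n-K), c t * (w * ((j.choose (K+1+t) : ℕ) : ℝ)) := by
        rw [Finset.mul_sum]
        exact Finset.sum_congr rfl (fun t _ => by ring)
      have e2 : w * (∑ t ∈ Finset.range (n-K), c t * (((i-j).choose (K+1+t) : ℕ) : ℝ))
          = ∑ t ∈ Finset.range (n-K), c t * (w * (((i-j).choose (K+1+t) : ℕ) : ℝ)) := by
        rw [Finset.mul_sum]
        exact Finset.sum_congr rfl (fun t _ => by ring)
      have e3 : ∑ t ∈ Finset.range (n-K), c t * (w * ((j.choose (K+1+t) : ℕ) : ℝ)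
            + w * (((i-j).choose (K+1+t) : ℕ) : ℝ))
          = (∑ t ∈ Finset.range (n-K), c t * (w * ((j.choose (K+1+t) : ℕ) : ℝ)))
            + ∑ t ∈ Finset.range (n-K), c t * (w * (((i-j).choose (K+1+t) : ℕ) : ℝ)) := by
        rw [← Finset.sum_add_distrib]
        exact Finset.sum_congr rfl (fun t _ => by ring)
      rw [e3, ← e1, ← e2]
      ring
    rw [Finset.sum_congr rfl expand, Finset.sum_add_distrib, ← Finset.mul_sum,
        bta_binom_sum p (1-p) hpq i, mul_one, Finset.sum_comm]
    have inner : ∀ t ∈ Finset.range (n-K),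
        ∑ j ∈ Finset.range (i+1), c t *
          ((i.choose j : ℝ) * p ^ j * (1 - p) ^ (i - j) * ((j.choose (K+1+t) : ℕ) : ℝ)
           + (i.choose j : ℝ) * p ^ j * (1 - p) ^ (i - j) * (((i-j).choose (K+1+t) : ℕ) : ℝ))
        = c t * ((i.choose (K+1+t) : ℝ) * (p^(K+1+t) + (1-p)^(K+1+t))) := by
      intro t _
      have e4 : ∑ j ∈ Finset.range (i+1), c t *
          ((i.choose j : ℝ) * p ^ j * (1 - p) ^ (i - j) * ((j.choose (K+1+t) : ℕ) : ℝ)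
           + (i.choose j : ℝ) * p ^ j * (1 - p) ^ (i - j) * (((i-j).choose (K+1+t) : ℕ) : ℝ))
          = c t * ((∑ j ∈ Finset.range (i+1),
              (i.choose j : ℝ) * p ^ j * (1 - p) ^ (i - j) * ((j.choose (K+1+t) : ℕ) : ℝ))
            + ∑ j ∈ Finset.range (i+1),
              (i.choose j : ℝ) * p ^ j * (1 - p) ^ (i - j) * (((i-j).choose (K+1+t) : ℕ) : ℝ)) := by
        rw [mul_add, Finset.mul_sum, Finset.mul_sum, ← Finset.sum_add_distrib]
        exact Finset.sum_congr rfl (fun j _ => by ring)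
      rw [e4, bta_binom_moment p (1-p) hpq i (K+1+t), bta_binom_moment' p (1-p) hpq i (K+1+t)]
      ring
    rw [Finset.sum_congr rfl inner]
    rw [hM]
    simp only
    have final : ∑ t ∈ Finset.range (n-K), c t * ((i.choose (K+1+t) : ℕ) : ℝ)
        - ∑ t ∈ Finset.range (n-K), c t * ((i.choose (K+1+t) : ℝ) * (p^(K+1+t) + (1-p)^(K+1+t))) = 2 := by
      rw [← Finset.sum_sub_distrib]
      have : ∀ t ∈ Finset.range (n-K),
          c t * ((i.choose (K+1+t) : ℕ) : ℝ) - c t * ((i.choose (K+1+t) : ℝ) * (p^(K+1+t) + (1-p)^(K+1+t)))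
          = 2 * (-1:ℝ)^t * (((K+t).choose K : ℕ) : ℝ) * ((i.choose (K+1+t) : ℕ) : ℝ) := by
        intro t _
        have hne := hDne (K+1+t) (by omega)
        rw [hc]
        simp only
        field_simp
        ring
      rw [Finset.sum_congr rfl this]
      exact hSum2 i hKi hin
    linarith [final]
  have main : ∀ i, i ≤ n → L i = M i := by
    intro i
    induction i using Nat.strong_induction_on with
    | _ i ih =>
      intro hi
      rcases le_or_gt i K with h | h
      · rw [hL1 i h, hM1 i h]
      · have hrecL := hL2 i h
        have hrecM := hMfull i h hi
        have hdiff : ∑ j ∈ Finset.range (i+1),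
            ((i.choose j : ℝ) * p ^ j * (1 - p) ^ (i - j) *
              ((L j + L (i - j)) - (M j + M (i - j))))
            = (p^i + (1-p)^i) * (L i - M i) := by
          rw [Finset.sum_range_succ']
          have e : Finset.range i = Finset.range ((i-1)+1) := by
            congr 1; omega
          rw [e, Finset.sum_range_succ]
          have mid : ∑ j ∈ Finset.range (i-1),
              ((i.choose (j+1) : ℝ) * p ^ (j+1) * (1 - p) ^ (i - (j+1)) *
                ((L (j+1) + L (i - (j+1))) - (M (j+1) + M (i - (j+1))))) = 0 := by
            apply Finset.sum_eq_zero
            intro j hj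
            simp only [Finset.mem_range] at hj
            rw [ih (j+1) (by omega) (by omega), ih (i-(j+1)) (by omega) (by omega)]
            ring
          rw [mid, zero_add]
          have hL0 : L 0 = 1 := hL1 0 (by omega)
          have hM0 : M 0 = 1 := hM1 0 (by omega)
          rw [show (i-1)+1 = i from by omega, Nat.sub_self, Nat.sub_zero,
              Nat.choose_self, Nat.choose_zero_right, hL0, hM0]
          simp only [Nat.cast_one, pow_zero]
          ring
        have hdiff2 : L i - M i = (p^i + (1-p)^i) * (L i - M i) := by
          have e5 : L i - M i = ∑ j ∈ Finset.range (i+1),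
              ((i.choose j : ℝ) * p ^ j * (1 - p) ^ (i - j) *
                ((L j + L (i - j)) - (M j + M (i - j)))) := by
            have hAB : (∑ j ∈ Finset.range (i+1),
                  (i.choose j : ℝ) * p ^ j * (1 - p) ^ (i - j) * (L j + L (i - j)))
                - (∑ j ∈ Finset.range (i+1),
                  (i.choose j : ℝ) * p ^ j * (1 - p) ^ (i - j) * (M j + M (i - j)))
                = ∑ j ∈ Finset.range (i+1),
                  ((i.choose j : ℝ) * p ^ j * (1 - p) ^ (i - j) *
                    ((L j + L (i - j)) - (M j + M (i - j)))) := by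
              rw [← Finset.sum_sub_distrib]
              exact Finset.sum_congr rfl (fun j _ => by ring)
            rw [hrecL, hrecM]
            linarith [hAB]
          exact e5.trans hdiff
        have hDi := hD i (by omega)
        nlinarith [hdiff2, hDi]
  rw [main n le_rfl, hM]
  simp only
  rw [show Finset.Icc 1 (n-K) = Finset.Ico 1 ((n-K)+1) from (Finset.Ico_add_one_right_eq_Icc 1 (n-K)).symm,
      Finset.sum_Ico_eq_sum_range]
  simp only [Nat.add_sub_cancel]
  have term : ∀ t ∈ Finset.range (n-K),
      c t * ((n.choose (K+1+t) : ℕ) : ℝ)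
      = -((2 * ((1+t : ℕ) : ℝ) * (-1:ℝ)^(1+t) * (((n-K).choose (1+t) : ℕ) : ℝ)) /
          ((((1+t : ℕ) : ℝ) + (K : ℝ)) * (1 - p^((1+t)+K) - (1-p)^((1+t)+K)))
          * (n.choose K : ℝ)) := by
    intro t ht
    have hne := hDne (K+1+t) (by omega)
    have hcoeffR : ((K+t+1 : ℕ) : ℝ) * (((K+t).choose K : ℕ) : ℝ) * ((n.choose (K+1+t) : ℕ) : ℝ)
        = ((t+1 : ℕ) : ℝ) * ((n.choose K : ℕ) : ℝ) * (((n-K).choose (t+1) : ℕ) : ℝ) := by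
      exact_mod_cast congrArg (Nat.cast : ℕ → ℝ) (bta_coeff K n t (le_of_lt hn))
    rw [show (1+t)+K = K+1+t from by omega, show 1+t = t+1 from by omega, hc]
    simp only
    have hx : (((t+1 : ℕ) : ℝ) + (K : ℝ)) = ((K+t+1 : ℕ) : ℝ) := by push_cast; ring
    rw [pow_succ]
    have hxne : ((t:ℝ) + 1 + (K:ℝ)) ≠ 0 := by positivity
    push_cast at hcoeffR ⊢
    field_simp
    linear_combination hcoeffR
  rw [Finset.sum_congr rfl term, Finset.sum_neg_distrib, Finset.mul_sum]
  have : ∀ t ∈ Finset.range (n-K),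
      (n.choose K : ℝ) * ((2 * ((1+t : ℕ) : ℝ) * (-1:ℝ)^(1+t) * (((n-K).choose (1+t) : ℕ) : ℝ)) /
          ((((1+t : ℕ) : ℝ) + (K : ℝ)) * (1 - p^((1+t)+K) - (1-p)^((1+t)+K))))
      = ((2 * ((1+t : ℕ) : ℝ) * (-1:ℝ)^(1+t) * (((n-K).choose (1+t) : ℕ) : ℝ)) /
          ((((1+t : ℕ) : ℝ) + (K : ℝ)) * (1 - p^((1+t)+K) - (1-p)^((1+t)+K)))
          * (n.choose K : ℝ)) := by
    intro t _; ring
  rw [Finset.sum_congr rfl this]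
  ring
end

section
/- For every integer n > K, the expected conditional CRI length under fair splitting (p = 1/2) satisfies L_n = 1 - C(n,K) · ∑_{j=1}^{n-K} [2 · j · (-1)^j · C(n-K, j)] / [(j+K) · (1 - 2^{-(j+K)+1})]. -/
open Finset

-- alternating sum lemma
lemma bta_altsum (K n : ℕ) (h : K < n) :
    ∑ r ∈ range (n+1), (-1:ℝ)^r * (n.choose r : ℝ) * (r.choose K : ℝ) = 0 := by
  have h1 : ∑ r ∈ range (n+1), (-1:ℝ)^r * (n.choose r : ℝ) * (r.choose K : ℝ)
      = ∑ r ∈ Ico K (n+1), (-1:ℝ)^r * (n.choose r : ℝ) * (r.choose K : ℝ) := by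
    rw [range_eq_Ico]
    refine (Finset.sum_subset (Finset.Ico_subset_Ico (Nat.zero_le _) le_rfl) ?_).symm
    intro r hr hr'
    simp only [mem_Ico] at hr hr'
    have : r < K := by omega
    rw [Nat.choose_eq_zero_of_lt this]
    simp
  rw [h1, Finset.sum_Ico_eq_sum_range]
  have h2 : ∀ s ∈ range (n + 1 - K), (-1:ℝ)^(K+s) * (n.choose (K+s) : ℝ) * ((K+s).choose K : ℝ)
      = ((-1:ℝ)^K * (n.choose K : ℝ)) * ((-1:ℝ)^s * ((n-K).choose s : ℝ)) := by
    intro s hs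
    simp only [mem_range] at hs
    have hkn : K + s ≤ n := by omega
    have := Nat.choose_mul (n := n) (Nat.le_add_right K s)
    have hc : (n.choose (K+s)) * ((K+s).choose K) = (n.choose K) * ((n-K).choose s) := by
      simpa using this
    have hc' : ((n.choose (K+s)) : ℝ) * (((K+s).choose K) : ℝ) = ((n.choose K):ℝ) * (((n-K).choose s):ℝ) := by
      exact_mod_cast congrArg (Nat.cast : ℕ → ℝ) hc
    rw [pow_add]
    calc (-1:ℝ)^K * (-1)^s * (n.choose (K+s) : ℝ) * ((K+s).choose K : ℝ)
        = (-1:ℝ)^K * (-1)^s * ((n.choose (K+s) : ℝ) * ((K+s).choose K : ℝ)) := by ring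
      _ = (-1:ℝ)^K * (-1)^s * ((n.choose K:ℝ) * ((n-K).choose s : ℝ)) := by rw [hc']
      _ = (-1:ℝ)^K * (n.choose K : ℝ) * ((-1:ℝ)^s * ((n-K).choose s : ℝ)) := by ring
  rw [Finset.sum_congr rfl h2, ← Finset.mul_sum]
  have h3 : n + 1 - K = (n - K) + 1 := by omega
  have h4 : ∑ s ∈ range ((n-K) + 1), (-1:ℝ)^s * ((n-K).choose s : ℝ) = 0 := by
    have := Int.alternating_sum_range_choose_of_ne (n := n - K) (by omega)
    have := congrArg (Int.cast : ℤ → ℝ) this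
    push_cast at this
    simpa using this
  rw [h3, h4, mul_zero]

lemma bta_A (n m : ℕ) (h : m ≤ n) :
    ∑ i ∈ range (n+1), (n.choose i : ℝ) * (i.choose m : ℝ) = (n.choose m : ℝ) * 2^(n-m) := by
  have hnat : ∑ i ∈ range (n+1), n.choose i * i.choose m = n.choose m * 2^(n-m) := by
    have h1 : ∑ i ∈ range (n+1), n.choose i * i.choose m
        = ∑ i ∈ Ico m (n+1), n.choose i * i.choose m := by
      rw [range_eq_Ico]
      refine (Finset.sum_subset (Finset.Ico_subset_Ico (Nat.zero_le _) le_rfl) ?_).symm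
      intro i hi hi'
      simp only [mem_Ico] at hi hi'
      rw [Nat.choose_eq_zero_of_lt (show i < m by omega), Nat.mul_zero]
    rw [h1, Finset.sum_Ico_eq_sum_range]
    have h2 : ∀ s ∈ range (n + 1 - m), n.choose (m+s) * (m+s).choose m
        = n.choose m * (n-m).choose s := by
      intro s hs
      simp only [mem_range] at hs
      have := Nat.choose_mul (n := n) (Nat.le_add_right m s)
      simpa using this
    rw [Finset.sum_congr rfl h2, ← Finset.mul_sum,
      show n + 1 - m = (n - m) + 1 by omega, Nat.sum_range_choose]
  calc ∑ i ∈ range (n+1), (n.choose i : ℝ) * (i.choose m : ℝ)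
      = ((∑ i ∈ range (n+1), n.choose i * i.choose m : ℕ) : ℝ) := by push_cast; rfl
    _ = (n.choose m : ℝ) * 2^(n-m) := by rw [hnat]; push_cast; rfl

lemma bta_B (K : ℕ) : ∀ n, K + 1 ≤ n →
    ∑ m ∈ Icc (K+1) n, (-1:ℝ)^m * (n.choose m : ℝ) * ((m-1).choose K : ℝ) = -(-1:ℝ)^K := by
  intro n hn
  induction n, hn using Nat.le_induction with
  | base =>
    rw [Icc_self, Finset.sum_singleton]
    simp [pow_succ]
  | succ n hn ih =>
    -- rewrite each summand using Pascal's rule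
    have pascal : ∀ m ∈ Icc (K+1) (n+1),
        (-1:ℝ)^m * ((n+1).choose m : ℝ) * ((m-1).choose K : ℝ)
        = (-1:ℝ)^m * (n.choose (m-1) : ℝ) * ((m-1).choose K : ℝ)
          + (-1:ℝ)^m * (n.choose m : ℝ) * ((m-1).choose K : ℝ) := by
      intro m hm
      simp only [mem_Icc] at hm
      obtain ⟨m, rfl⟩ : ∃ m', m = m' + 1 := ⟨m - 1, by omega⟩
      rw [Nat.choose_succ_succ']
      push_cast
      ring
    rw [Finset.sum_congr rfl pascal, Finset.sum_add_distrib]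
    have h2 : ∑ m ∈ Icc (K+1) (n+1), (-1:ℝ)^m * (n.choose m : ℝ) * ((m-1).choose K : ℝ)
        = -(-1:ℝ)^K := by
      rw [← Finset.insert_Icc_right_eq_Icc_add_one (by omega : K+1 ≤ n+1), Finset.sum_insert (by simp)]
      rw [Nat.choose_eq_zero_of_lt (Nat.lt_add_one n), ih]
      simp
    have h1 : ∑ m ∈ Icc (K+1) (n+1), (-1:ℝ)^m * (n.choose (m-1) : ℝ) * ((m-1).choose K : ℝ)
        = 0 := by
      have hmap : Icc (K+1) (n+1) = Finset.map (addLeftEmbedding 1) (Icc K n) := by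
        rw [map_add_left_Icc]
        congr 1 <;> omega
      rw [hmap, Finset.sum_map]
      simp only [addLeftEmbedding_apply]
      have : ∀ r ∈ Icc K n, (-1:ℝ)^(1+r) * (n.choose (1+r-1) : ℝ) * ((1+r-1).choose K : ℝ)
          = -((-1:ℝ)^r * (n.choose r : ℝ) * (r.choose K : ℝ)) := by
        intro r hr
        have : 1 + r - 1 = r := by omega
        rw [this, pow_add]
        ring
      rw [Finset.sum_congr rfl this, Finset.sum_neg_distrib]
      have hext : ∑ r ∈ Icc K n, (-1:ℝ)^r * (n.choose r : ℝ) * (r.choose K : ℝ)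
          = ∑ r ∈ range (n+1), (-1:ℝ)^r * (n.choose r : ℝ) * (r.choose K : ℝ) := by
        rw [range_eq_Ico, ← Finset.Ico_add_one_right_eq_Icc]
        refine Finset.sum_subset (Finset.Ico_subset_Ico (Nat.zero_le _) le_rfl) ?_
        intro r hr hr'
        simp only [mem_Ico] at hr hr'
        rw [Nat.choose_eq_zero_of_lt (show r < K by omega)]
        simp
      rw [hext, bta_altsum K n hn]
      simp
    rw [h1, h2, zero_add]

noncomputable def btaE (K m : ℕ) : ℝ :=
  -2 * (-1)^K * (-1)^m * ((m-1).choose K : ℝ) / (1 - (2:ℝ)^((1:ℤ) - (m:ℤ)))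

noncomputable def btaM (K n : ℕ) : ℝ := 1 + ∑ m ∈ Icc (K+1) n, (n.choose m : ℝ) * btaE K m

lemma btaDen (m : ℕ) (hm : 2 ≤ m) : (1 : ℝ) - (2:ℝ)^((1:ℤ) - (m:ℤ)) ≠ 0 := by
  have : (2:ℝ)^((1:ℤ) - (m:ℤ)) < 1 :=
    zpow_lt_one_of_neg₀ (by norm_num) (by omega)
  intro hc
  nlinarith [this]

lemma bta_key (K n : ℕ) (hK : 1 ≤ K) (h : K < n) :
    ∑ m ∈ Icc (K+1) n, (n.choose m : ℝ) * btaE K m * (1 - (2:ℝ)^((1:ℤ)-(m:ℤ))) = 2 := by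
  have h1 : ∀ m ∈ Icc (K+1) n, (n.choose m : ℝ) * btaE K m * (1 - (2:ℝ)^((1:ℤ)-(m:ℤ)))
      = (-2*(-1:ℝ)^K) * ((-1:ℝ)^m * (n.choose m : ℝ) * ((m-1).choose K : ℝ)) := by
    intro m hm
    simp only [mem_Icc] at hm
    have hden := btaDen m (by omega)
    rw [btaE]
    have hc := div_mul_cancel₀ (-2 * (-1:ℝ)^K * (-1)^m * ((m-1).choose K : ℝ)) hden
    calc (n.choose m : ℝ) * (-2 * (-1:ℝ)^K * (-1)^m * ((m-1).choose K : ℝ) / (1 - (2:ℝ)^((1:ℤ) - (m:ℤ)))) * (1 - (2:ℝ)^((1:ℤ)-(m:ℤ)))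
        = (-2 * (-1:ℝ)^K * (-1)^m * ((m-1).choose K : ℝ) / (1 - (2:ℝ)^((1:ℤ) - (m:ℤ))) * (1 - (2:ℝ)^((1:ℤ)-(m:ℤ)))) * (n.choose m : ℝ) := by ring
      _ = (-2 * (-1:ℝ)^K * (-1)^m * ((m-1).choose K : ℝ)) * (n.choose m : ℝ) := by rw [hc]
      _ = (-2*(-1:ℝ)^K) * ((-1:ℝ)^m * (n.choose m : ℝ) * ((m-1).choose K : ℝ)) := by ring
  rw [Finset.sum_congr rfl h1, ← Finset.mul_sum, bta_B K n h]
  have h2 : ((-1:ℝ)^K)*((-1:ℝ)^K) = 1 := by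
    rw [← pow_add, show K+K = 2*K by ring, pow_mul]; norm_num
  calc (-2*(-1:ℝ)^K) * (-(-1:ℝ)^K) = 2 * (((-1:ℝ)^K)*((-1:ℝ)^K)) := by ring
    _ = 2 := by rw [h2]; norm_num

lemma bta_Mrec (K n : ℕ) (hK : 1 ≤ K) (h : K < n) :
    btaM K n = 1 + 2*(1/2:ℝ)^n * ∑ i ∈ range (n+1), (n.choose i : ℝ) * btaM K i := by
  have hT : ∑ i ∈ range (n+1), (n.choose i : ℝ) * btaM K i
      = 2^n + ∑ m ∈ Icc (K+1) n, ((n.choose m : ℝ) * 2^(n-m)) * btaE K m := by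
    have e1 : ∀ i ∈ range (n+1), (n.choose i : ℝ) * btaM K i
        = (n.choose i : ℝ) + ∑ m ∈ Icc (K+1) n, (n.choose i : ℝ) * (i.choose m : ℝ) * btaE K m := by
      intro i hi
      simp only [mem_range] at hi
      have hsub : ∑ m ∈ Icc (K+1) i, (i.choose m : ℝ) * btaE K m
          = ∑ m ∈ Icc (K+1) n, (i.choose m : ℝ) * btaE K m := by
        refine Finset.sum_subset (Finset.Icc_subset_Icc_right (by omega)) ?_
        intro m hm hm'
        simp only [mem_Icc] at hm hm'
        rw [Nat.choose_eq_zero_of_lt (show i < m by omega)]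
        simp
      rw [btaM, mul_add, mul_one, hsub, Finset.mul_sum]
      congr 1
      refine Finset.sum_congr rfl fun m _ => by ring
    rw [Finset.sum_congr rfl e1, Finset.sum_add_distrib]
    congr 1
    · have := Nat.sum_range_choose n
      calc ∑ i ∈ range (n+1), (n.choose i : ℝ)
          = ((∑ i ∈ range (n+1), n.choose i : ℕ) : ℝ) := by push_cast; rfl
        _ = 2^n := by rw [this]; push_cast; rfl
    · rw [Finset.sum_comm]
      refine Finset.sum_congr rfl fun m hm => ?_
      simp only [mem_Icc] at hm
      rw [← Finset.sum_mul, bta_A n m (by omega)]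
  rw [hT]
  have hpow : (2:ℝ)*(1/2:ℝ)^n * 2^n = 2 := by
    rw [div_pow, one_pow]
    field_simp
  have hpow2 : ∀ m ∈ Icc (K+1) n, (2:ℝ)*(1/2:ℝ)^n * ((n.choose m : ℝ) * 2^(n-m) * btaE K m)
      = (n.choose m : ℝ) * btaE K m * (2:ℝ)^((1:ℤ)-(m:ℤ)) := by
    intro m hm
    simp only [mem_Icc] at hm
    have h2 : ((2:ℝ))^(n-m) = (2:ℝ)^((n:ℤ)-(m:ℤ)) := by
      rw [← zpow_natCast]
      congr 1
      omega
    have h3 : ((1/2:ℝ))^n = (2:ℝ)^(-(n:ℤ)) := by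
      rw [one_div, inv_pow, ← zpow_natCast (2:ℝ) n, ← zpow_neg]
    rw [h2, h3]
    have h4 : (2:ℝ) * (2:ℝ)^(-(n:ℤ)) * (2:ℝ)^((n:ℤ)-(m:ℤ)) = (2:ℝ)^((1:ℤ)-(m:ℤ)) := by
      have e : (2:ℝ)^((1:ℤ)-(m:ℤ)) = (2:ℝ)^(1:ℤ) * (2:ℝ)^(-(n:ℤ)) * (2:ℝ)^((n:ℤ)-(m:ℤ)) := by
        rw [← zpow_add₀ (by norm_num : (2:ℝ) ≠ 0), ← zpow_add₀ (by norm_num : (2:ℝ) ≠ 0)]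
        congr 1
        ring
      rw [e, zpow_one]
    calc (2:ℝ)*(2:ℝ)^(-(n:ℤ)) * ((n.choose m : ℝ) * (2:ℝ)^((n:ℤ)-(m:ℤ)) * btaE K m)
        = ((2:ℝ) * (2:ℝ)^(-(n:ℤ)) * (2:ℝ)^((n:ℤ)-(m:ℤ))) * ((n.choose m:ℝ) * btaE K m) := by ring
      _ = (n.choose m : ℝ) * btaE K m * (2:ℝ)^((1:ℤ)-(m:ℤ)) := by rw [h4]; ring
  rw [mul_add, hpow, Finset.mul_sum, Finset.sum_congr rfl hpow2]
  have hsplit : ∑ m ∈ Icc (K+1) n, (n.choose m : ℝ) * btaE K m * (2:ℝ)^((1:ℤ)-(m:ℤ))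
      = (∑ m ∈ Icc (K+1) n, (n.choose m : ℝ) * btaE K m)
        - ∑ m ∈ Icc (K+1) n, (n.choose m : ℝ) * btaE K m * (1 - (2:ℝ)^((1:ℤ)-(m:ℤ))) := by
    rw [← Finset.sum_sub_distrib]
    refine Finset.sum_congr rfl fun m _ => by ring
  rw [hsplit, bta_key K n hK h, btaM]
  ring

lemma bta_natid (K n j : ℕ) (hK : 1 ≤ K) (hj : 1 ≤ j) (hjn : K + j ≤ n) :
    (j+K) * (n.choose (K+j) * (K+j-1).choose K) = j * (n.choose K * (n-K).choose j) := by
  obtain ⟨j', rfl⟩ : ∃ j', j = j' + 1 := ⟨j - 1, by omega⟩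
  have h1 : K + (j'+1) - 1 = K + j' := by omega
  rw [h1]
  have habs := Nat.add_one_mul_choose_eq (K + j') j'
  have hsymm1 : (K + j').choose K = (K + j').choose j' := Nat.choose_symm_add
  have hsymm2 : (K + (j'+1)).choose (j'+1) = (K + (j'+1)).choose K := by
    rw [← Nat.choose_symm_add]
  have htri : n.choose (K+(j'+1)) * (K+(j'+1)).choose K
      = n.choose K * (n-K).choose (j'+1) := by
    have := Nat.choose_mul (n := n) (Nat.le_add_right K (j'+1))
    simpa using this
  calc (j'+1+K) * (n.choose (K+(j'+1)) * (K + j').choose K)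
      = n.choose (K+(j'+1)) * ((K + j' + 1) * (K+j').choose j') := by rw [hsymm1]; ring
    _ = n.choose (K+(j'+1)) * ((K + j' + 1).choose (j'+1) * (j'+1)) := by
        rw [← habs]
    _ = (j'+1) * (n.choose (K+(j'+1)) * (K+(j'+1)).choose K) := by
        rw [show K + j' + 1 = K + (j'+1) by ring, hsymm2]; ring
    _ = (j'+1) * (n.choose K * (n-K).choose (j'+1)) := by rw [htri]

lemma bta_closed (K n : ℕ) (hK : 1 ≤ K) (h : K < n) :
    btaM K n = 1 - (n.choose K : ℝ) * ∑ j ∈ Finset.Icc 1 (n - K),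
        (2 * (j : ℝ) * (-1 : ℝ) ^ j * ((n - K).choose j : ℝ)) /
          (((j : ℝ) + (K : ℝ)) * (1 - (2 : ℝ) ^ (-(((j : ℤ)) + (K : ℤ)) + 1))) := by
  rw [btaM]
  have hmap : Icc (K+1) n = Finset.map (addLeftEmbedding K) (Icc 1 (n-K)) := by
    rw [map_add_left_Icc]
    congr 1
    omega
  rw [hmap, Finset.sum_map]
  simp only [addLeftEmbedding_apply]
  have hterm : ∀ j ∈ Icc 1 (n-K), (n.choose (K+j) : ℝ) * btaE K (K+j)
      = -((n.choose K : ℝ) * ((2 * (j : ℝ) * (-1 : ℝ) ^ j * ((n - K).choose j : ℝ)) /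
          (((j : ℝ) + (K : ℝ)) * (1 - (2 : ℝ) ^ (-(((j : ℤ)) + (K : ℤ)) + 1))))) := by
    intro j hj
    simp only [mem_Icc] at hj
    have hexp : (1:ℤ) - ((K+j : ℕ) : ℤ) = -((j:ℤ) + (K:ℤ)) + 1 := by push_cast; ring
    have hD : (1:ℝ) - (2:ℝ)^(-((j:ℤ) + (K:ℤ)) + 1) ≠ 0 := by
      have := btaDen (K+j) (by omega)
      rwa [hexp] at this
    have hjK : ((j:ℝ) + (K:ℝ)) ≠ 0 := by positivity -- j ≥ 1
    have hid := bta_natid K n j hK hj.1 (by omega)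
    have hidR : ((j:ℝ)+(K:ℝ)) * ((n.choose (K+j) : ℝ) * ((K+j-1).choose K : ℝ))
        = (j:ℝ) * ((n.choose K : ℝ) * ((n-K).choose j : ℝ)) := by
      exact_mod_cast congrArg (Nat.cast : ℕ → ℝ) hid
    rw [btaE, hexp]
    have hsgn : (-1:ℝ)^(K+j) = (-1:ℝ)^K * (-1:ℝ)^j := pow_add _ _ _
    have hK2 : ((-1:ℝ)^K) * ((-1:ℝ)^K) = 1 := by
      rw [← pow_add, show K+K = 2*K by ring, pow_mul]; norm_num
    set D : ℝ := 1 - (2:ℝ)^(-((j:ℤ) + (K:ℤ)) + 1) with hDdef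
    have hF : ((j:ℝ) + (K:ℝ)) * D ≠ 0 := mul_ne_zero hjK hD
    have key2 : (n.choose (K+j):ℝ) * (-2*(-1:ℝ)^K*(-1:ℝ)^(K+j)*((K+j-1).choose K : ℝ)) * ((j:ℝ)+(K:ℝ))
        = -((n.choose K:ℝ) * (2*(j:ℝ)*(-1:ℝ)^j*((n-K).choose j : ℝ))) := by
      calc (n.choose (K+j):ℝ) * (-2*(-1:ℝ)^K*(-1:ℝ)^(K+j)*((K+j-1).choose K : ℝ)) * ((j:ℝ)+(K:ℝ))
          = (-2) * (((-1:ℝ)^K*(-1:ℝ)^K) * (-1:ℝ)^j) *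
            (((j:ℝ)+(K:ℝ)) * ((n.choose (K+j):ℝ) * ((K+j-1).choose K : ℝ))) := by rw [hsgn]; ring
        _ = (-2) * (-1:ℝ)^j * ((j:ℝ) * ((n.choose K:ℝ) * ((n-K).choose j : ℝ))) := by
            rw [hK2, hidR]; ring
        _ = -((n.choose K:ℝ) * (2*(j:ℝ)*(-1:ℝ)^j*((n-K).choose j : ℝ))) := by ring
    rw [mul_div_assoc',
      show -((n.choose K:ℝ) * (2*(j:ℝ)*(-1:ℝ)^j*((n-K).choose j : ℝ) / (((j:ℝ)+(K:ℝ))*D)))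
        = (-((n.choose K:ℝ) * (2*(j:ℝ)*(-1:ℝ)^j*((n-K).choose j : ℝ)))) / (((j:ℝ)+(K:ℝ))*D)
        from by ring,
      div_eq_div_iff hD hF]
    linear_combination D * key2
  rw [Finset.sum_congr rfl hterm, Finset.sum_neg_distrib, ← Finset.mul_sum]
  ring

theorem bta_cri_closed_form_fair
    (K : ℕ) (hK : 1 ≤ K)
    (L : ℕ → ℝ)
    (hL1 : ∀ n, n ≤ K → L n = 1)
    (hL2 : ∀ n, K < n → L n = 1 + ∑ i ∈ Finset.range (n + 1),
        (n.choose i : ℝ) * (1 / 2 : ℝ) ^ i * (1 - (1 / 2 : ℝ)) ^ (n - i) * (L i + L (n - i)))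
    (n : ℕ) (hn : K < n) :
    L n = 1 - (n.choose K : ℝ) * ∑ j ∈ Finset.Icc 1 (n - K),
        (2 * (j : ℝ) * (-1 : ℝ) ^ j * ((n - K).choose j : ℝ)) /
          (((j : ℝ) + (K : ℝ)) * (1 - (2 : ℝ) ^ (-(((j : ℤ)) + (K : ℤ)) + 1))) := by
  have main : ∀ n, L n = btaM K n := by
    intro n
    induction n using Nat.strong_induction_on with
    | _ n ih =>
      by_cases hcase : n ≤ K
      · rw [hL1 n hcase, btaM, Finset.Icc_eq_empty (by omega), Finset.sum_empty, add_zero]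
      · push_neg at hcase
        have hrec := hL2 n hcase
        have e1 : ∀ i ∈ range (n+1),
            (n.choose i : ℝ) * (1 / 2 : ℝ) ^ i * (1 - (1 / 2 : ℝ)) ^ (n - i) * (L i + L (n - i))
            = (1/2:ℝ)^n * ((n.choose i : ℝ) * L i) + (1/2:ℝ)^n * ((n.choose i : ℝ) * L (n-i)) := by
          intro i hi
          simp only [mem_range] at hi
          have hp : (1 - (1/2:ℝ)) = (1/2:ℝ) := by norm_num
          have hpw : (1/2:ℝ)^i * (1/2:ℝ)^(n-i) = (1/2:ℝ)^n := by
            rw [← pow_add, show i + (n - i) = n by omega]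
          rw [hp]
          calc (n.choose i : ℝ) * (1/2:ℝ)^i * (1/2:ℝ)^(n-i) * (L i + L (n-i))
              = ((1/2:ℝ)^i * (1/2:ℝ)^(n-i)) * ((n.choose i : ℝ) * (L i + L (n-i))) := by ring
            _ = (1/2:ℝ)^n * ((n.choose i : ℝ) * (L i + L (n-i))) := by rw [hpw]
            _ = (1/2:ℝ)^n * ((n.choose i : ℝ) * L i) + (1/2:ℝ)^n * ((n.choose i : ℝ) * L (n-i)) := by ring
        rw [Finset.sum_congr rfl e1, Finset.sum_add_distrib, ← Finset.mul_sum, ← Finset.mul_sum] at hrec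
        have hrefl : ∑ i ∈ range (n+1), (n.choose i : ℝ) * L (n-i)
            = ∑ i ∈ range (n+1), (n.choose i : ℝ) * L i := by
          have e2 : ∀ i ∈ range (n+1), (n.choose i : ℝ) * L (n-i)
              = (n.choose (n-i) : ℝ) * L (n-i) := by
            intro i hi
            simp only [mem_range] at hi
            rw [Nat.choose_symm (by omega)]
          rw [Finset.sum_congr rfl e2]
          have := Finset.sum_range_reflect (fun i => (n.choose i : ℝ) * L i) (n+1)
          simpa using this
        rw [hrefl] at hrec
        -- hrec : L n = 1 + (1/2)^n * S' + (1/2)^n * S'  where S' = ∑_{i≤n} C(n,i) L i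
        have hsum : ∑ i ∈ range (n+1), (n.choose i : ℝ) * L i
            = (∑ i ∈ range n, (n.choose i : ℝ) * btaM K i) + L n := by
          rw [Finset.sum_range_succ, Nat.choose_self]
          push_cast
          rw [one_mul]
          congr 1
          refine Finset.sum_congr rfl fun i hi => ?_
          simp only [mem_range] at hi
          rw [ih i hi]
        have hMsum : ∑ i ∈ range (n+1), (n.choose i : ℝ) * btaM K i
            = (∑ i ∈ range n, (n.choose i : ℝ) * btaM K i) + btaM K n := by
          rw [Finset.sum_range_succ, Nat.choose_self]
          push_cast
          rw [one_mul]
        have hM := bta_Mrec K n hK hcase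
        rw [hMsum] at hM
        rw [hsum] at hrec
        set S := ∑ i ∈ range n, (n.choose i : ℝ) * btaM K i
        set c := (1/2:ℝ)^n with hc
        have hclt : 2*c < 1 := by
          have h2 : (1/2:ℝ)^n ≤ (1/2:ℝ)^2 := by
            apply pow_le_pow_of_le_one (by norm_num) (by norm_num) (by omega)
          rw [hc]
          nlinarith
        nlinarith [hrec, hM, hclt]
  rw [main n, bta_closed K n hK hn]
end

section
/- Define the coefficient sequence a : ℕ → ℝ by a_j = ∑_{i=0}^{j} (-1)^{j-i} · L_i / (i! · (j-i)!). Then for every integer n > K, the coefficients satisfy a_n · (1 - p^n - (1-p)^n) = 2 · ∑_{k=0}^{K} (-1)^{n-k+1} / (k! · (n-k)!). -/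
open Finset

private lemma swap_lemma (x y : ℝ) (f : ℕ → ℝ) (n : ℕ) :
    ∑ i ∈ range (n + 1), (-1 : ℝ) ^ (n - i) * (n.choose i : ℝ) *
      ∑ j ∈ range (i + 1), (i.choose j : ℝ) * x ^ j * y ^ (i - j) * f j
    = ∑ j ∈ range (n + 1), (n.choose j : ℝ) * x ^ j * (y + (-1)) ^ (n - j) * f j := by
  have h1 : ∀ i ∈ range (n+1), (-1:ℝ)^(n-i) * (n.choose i:ℝ) *
      ∑ j ∈ range (i+1), (i.choose j:ℝ) * x^j * y^(i-j) * f j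
      = ∑ j ∈ range (i+1), (-1:ℝ)^(n-i) * (n.choose i:ℝ) *
        ((i.choose j:ℝ) * x^j * y^(i-j) * f j) := fun i _ => Finset.mul_sum _ _ _
  rw [Finset.sum_congr rfl h1]
  rw [Finset.sum_comm' (t' := range (n+1)) (s' := fun j => Ico j (n+1))
    (by intro i j; simp only [Finset.mem_range, Finset.mem_Ico]; omega)]
  refine Finset.sum_congr rfl fun j hj => ?_
  have hjn : j ≤ n := by simpa [Nat.lt_succ_iff] using hj
  rw [Finset.sum_Ico_eq_sum_range]
  have hrange : n + 1 - j = (n - j) + 1 := by omega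
  rw [hrange]
  have hterm : ∀ m ∈ range ((n - j) + 1),
      (-1:ℝ)^(n-(j+m)) * (n.choose (j+m):ℝ) * (((j+m).choose j:ℝ) * x^j * y^((j+m)-j) * f j)
      = (n.choose j:ℝ) * x^j * f j * (y^m * (-1:ℝ)^((n-j)-m) * ((n-j).choose m : ℝ)) := by
    intro m hm
    have hm' : m ≤ n - j := by simpa [Nat.lt_succ_iff] using hm
    have hjm : j + m ≤ n := by omega
    have hcc : (n.choose (j+m) : ℝ) * ((j+m).choose j : ℝ)
        = (n.choose j : ℝ) * ((n-j).choose m : ℝ) := by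
      have := Nat.choose_mul (n := n) (Nat.le_add_right j m)
      have h2 : j + m - j = m := by omega
      rw [h2] at this
      exact_mod_cast congrArg (Nat.cast : ℕ → ℝ) this
    have he : n - (j + m) = (n - j) - m := by omega
    have he2 : (j + m) - j = m := by omega
    rw [he, he2]
    calc (-1:ℝ)^((n-j)-m) * (n.choose (j+m):ℝ) * (((j+m).choose j:ℝ) * x^j * y^m * f j)
        = ((n.choose (j+m):ℝ) * ((j+m).choose j:ℝ)) * ((-1:ℝ)^((n-j)-m) * x^j * y^m * f j) := by
          ring
      _ = ((n.choose j:ℝ) * ((n-j).choose m:ℝ)) * ((-1:ℝ)^((n-j)-m) * x^j * y^m * f j) := by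
          rw [hcc]
      _ = (n.choose j:ℝ) * x^j * f j * (y^m * (-1:ℝ)^((n-j)-m) * ((n-j).choose m : ℝ)) := by
          ring
  rw [Finset.sum_congr rfl hterm, ← Finset.mul_sum, ← add_pow]
  ring

private lemma alt_zero (n : ℕ) (hn : n ≠ 0) :
    ∑ i ∈ range (n + 1), (-1 : ℝ) ^ (n - i) * (n.choose i : ℝ) = 0 := by
  have h : (∑ i ∈ range (n+1), (-1:ℤ)^i * n.choose i) = 0 :=
    Int.alternating_sum_range_choose_of_ne hn
  have h' : ∑ i ∈ range (n+1), (-1:ℝ)^i * (n.choose i : ℝ) = 0 := by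
    exact_mod_cast congrArg (Int.cast : ℤ → ℝ) h
  have hterm : ∀ i ∈ range (n+1),
      (-1:ℝ)^(n-i) * (n.choose i : ℝ) = (-1:ℝ)^n * ((-1:ℝ)^i * (n.choose i : ℝ)) := by
    intro i hi
    have hin : i ≤ n := by simpa [Nat.lt_succ_iff] using hi
    have : (-1:ℝ)^n = (-1:ℝ)^(n-i) * (-1:ℝ)^i := by
      rw [← pow_add]; congr 1; omega
    rw [this]
    have h2 : (-1:ℝ)^i * (-1:ℝ)^i = 1 := by
      rw [← pow_add, ← two_mul, pow_mul]; norm_num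
    linear_combination (-(-1:ℝ)^(n-i) * (n.choose i : ℝ)) * h2
  rw [Finset.sum_congr rfl hterm, ← Finset.mul_sum, h', mul_zero]

theorem bta_cri_coefficient_formula
    (K : ℕ) (hK : 1 ≤ K) (p : ℝ) (hp0 : 0 < p) (hp1 : p < 1)
    (L : ℕ → ℝ)
    (hL1 : ∀ n, n ≤ K → L n = 1)
    (hL2 : ∀ n, K < n → L n = 1 + ∑ i ∈ Finset.range (n + 1),
        (n.choose i : ℝ) * p ^ i * (1 - p) ^ (n - i) * (L i + L (n - i)))
    (a : ℕ → ℝ)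
    (ha : ∀ j, a j = ∑ i ∈ Finset.range (j + 1),
        (-1 : ℝ) ^ (j - i) * L i / ((i.factorial : ℝ) * ((j - i).factorial : ℝ)))
    (n : ℕ) (hn : K < n) :
    a n * (1 - p ^ n - (1 - p) ^ n) =
      2 * ∑ k ∈ Finset.range (K + 1),
        (-1 : ℝ) ^ (n - k + 1) / ((k.factorial : ℝ) * ((n - k).factorial : ℝ)) := by
  set q : ℝ := 1 - p with hq
  set T : ℝ := ∑ i ∈ range (n + 1), (-1:ℝ)^(n-i) * (n.choose i : ℝ) * L i with hT
  -- Step 2: uniform expansion of L i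
  have hexp : ∀ i, L i = 1 + (∑ j ∈ range (i+1), (i.choose j:ℝ) * p^j * q^(i-j) * L j)
      + (∑ j ∈ range (i+1), (i.choose j:ℝ) * q^j * p^(i-j) * L j)
      + (if i ≤ K then (-2:ℝ) else 0) := by
    intro i
    by_cases hiK : i ≤ K
    · rw [if_pos hiK, hL1 i hiK]
      have h1 : ∑ j ∈ range (i+1), (i.choose j:ℝ) * p^j * q^(i-j) * L j
          = ∑ j ∈ range (i+1), p^j * q^(i-j) * (i.choose j:ℝ) := by
        refine Finset.sum_congr rfl fun j hj => ?_
        have hj' : j ≤ i := by simpa [Nat.lt_succ_iff] using hj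
        rw [hL1 j (le_trans hj' hiK)]; ring
      have h2 : ∑ j ∈ range (i+1), (i.choose j:ℝ) * q^j * p^(i-j) * L j
          = ∑ j ∈ range (i+1), q^j * p^(i-j) * (i.choose j:ℝ) := by
        refine Finset.sum_congr rfl fun j hj => ?_
        have hj' : j ≤ i := by simpa [Nat.lt_succ_iff] using hj
        rw [hL1 j (le_trans hj' hiK)]; ring
      rw [h1, h2, ← add_pow, ← add_pow]
      have : p + q = 1 := by rw [hq]; ring
      have : (p + q)^i = 1 := by rw [this, one_pow]
      have h3 : (q + p)^i = 1 := by rw [add_comm]; exact this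
      rw [this, h3]; ring
    · push_neg at hiK
      rw [if_neg (by omega), hL2 i hiK]
      have hsplit : ∑ j ∈ range (i+1), (i.choose j:ℝ) * p^j * q^(i-j) * (L j + L (i-j))
          = (∑ j ∈ range (i+1), (i.choose j:ℝ) * p^j * q^(i-j) * L j)
          + (∑ j ∈ range (i+1), (i.choose j:ℝ) * p^j * q^(i-j) * L (i-j)) := by
        rw [← Finset.sum_add_distrib]
        exact Finset.sum_congr rfl fun j _ => by ring
      have hrefl : ∑ j ∈ range (i+1), (i.choose j:ℝ) * p^j * q^(i-j) * L (i-j)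
          = ∑ j ∈ range (i+1), (i.choose j:ℝ) * q^j * p^(i-j) * L j := by
        rw [← Finset.sum_range_reflect]
        refine Finset.sum_congr rfl fun j hj => ?_
        have hj' : j ≤ i := by simpa [Nat.lt_succ_iff] using hj
        have e1 : i + 1 - 1 - j = i - j := by omega
        have e2 : i - (i - j) = j := by omega
        rw [e1, e2, Nat.choose_symm hj']; ring
      rw [hsplit, hrefl]; ring
  -- Step 3: T = p^n T + q^n T + E
  have hTexp : T = p^n * T + q^n * T
      + (-2) * ∑ k ∈ range (K+1), (-1:ℝ)^(n-k) * (n.choose k : ℝ) := by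
    have hstep : T = (∑ i ∈ range (n+1), (-1:ℝ)^(n-i) * (n.choose i:ℝ))
        + (∑ i ∈ range (n+1), (-1:ℝ)^(n-i) * (n.choose i:ℝ) *
            ∑ j ∈ range (i+1), (i.choose j:ℝ) * p^j * q^(i-j) * L j)
        + (∑ i ∈ range (n+1), (-1:ℝ)^(n-i) * (n.choose i:ℝ) *
            ∑ j ∈ range (i+1), (i.choose j:ℝ) * q^j * p^(i-j) * L j)
        + (∑ i ∈ range (n+1), (-1:ℝ)^(n-i) * (n.choose i:ℝ) *
            (if i ≤ K then (-2:ℝ) else 0)) := by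
      rw [hT, ← Finset.sum_add_distrib, ← Finset.sum_add_distrib, ← Finset.sum_add_distrib]
      refine Finset.sum_congr rfl fun i _ => ?_
      rw [hexp i]; ring
    have hA : ∑ i ∈ range (n+1), (-1:ℝ)^(n-i) * (n.choose i:ℝ) = 0 :=
      alt_zero n (by omega)
    have hB1 : (∑ i ∈ range (n+1), (-1:ℝ)^(n-i) * (n.choose i:ℝ) *
        ∑ j ∈ range (i+1), (i.choose j:ℝ) * p^j * q^(i-j) * L j) = p^n * T := by
      rw [swap_lemma p q L n, hT, Finset.mul_sum]
      refine Finset.sum_congr rfl fun j hj => ?_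
      have hj' : j ≤ n := by simpa [Nat.lt_succ_iff] using hj
      have hqp : q + (-1) = -p := by rw [hq]; ring
      rw [hqp, neg_pow]
      have hpp : p^j * p^(n-j) = p^n := by rw [← pow_add]; congr 1; omega
      calc (n.choose j:ℝ) * p^j * ((-1:ℝ)^(n-j) * p^(n-j)) * L j
          = (p^j * p^(n-j)) * ((-1:ℝ)^(n-j) * (n.choose j:ℝ) * L j) := by ring
        _ = p^n * ((-1:ℝ)^(n-j) * (n.choose j:ℝ) * L j) := by rw [hpp]
    have hB2 : (∑ i ∈ range (n+1), (-1:ℝ)^(n-i) * (n.choose i:ℝ) *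
        ∑ j ∈ range (i+1), (i.choose j:ℝ) * q^j * p^(i-j) * L j) = q^n * T := by
      rw [swap_lemma q p L n, hT, Finset.mul_sum]
      refine Finset.sum_congr rfl fun j hj => ?_
      have hj' : j ≤ n := by simpa [Nat.lt_succ_iff] using hj
      have hqp : p + (-1) = -q := by rw [hq]; ring
      rw [hqp, neg_pow]
      have hpp : q^j * q^(n-j) = q^n := by rw [← pow_add]; congr 1; omega
      calc (n.choose j:ℝ) * q^j * ((-1:ℝ)^(n-j) * q^(n-j)) * L j
          = (q^j * q^(n-j)) * ((-1:ℝ)^(n-j) * (n.choose j:ℝ) * L j) := by ring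
        _ = q^n * ((-1:ℝ)^(n-j) * (n.choose j:ℝ) * L j) := by rw [hpp]
    have hE : (∑ i ∈ range (n+1), (-1:ℝ)^(n-i) * (n.choose i:ℝ) *
        (if i ≤ K then (-2:ℝ) else 0))
        = (-2) * ∑ k ∈ range (K+1), (-1:ℝ)^(n-k) * (n.choose k : ℝ) := by
      rw [Finset.mul_sum]
      rw [← Finset.sum_subset (Finset.range_subset_range.mpr (by omega : K + 1 ≤ n + 1))]
      · refine Finset.sum_congr rfl fun i hi => ?_
        have : i ≤ K := by simpa [Nat.lt_succ_iff] using hi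
        rw [if_pos this]; ring
      · intro i _ hi
        have : ¬ i ≤ K := by simp [Nat.lt_succ_iff] at hi; omega
        rw [if_neg this, mul_zero]
    rw [hA, hB1, hB2, hE] at hstep
    linarith [hstep]
  have hTfinal : T * (1 - p^n - q^n)
      = 2 * ∑ k ∈ range (K+1), (-1:ℝ)^(n-k+1) * (n.choose k : ℝ) := by
    have : T - p^n * T - q^n * T
        = (-2) * ∑ k ∈ range (K+1), (-1:ℝ)^(n-k) * (n.choose k : ℝ) := by
      linarith [hTexp]
    calc T * (1 - p^n - q^n) = T - p^n * T - q^n * T := by ring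
      _ = (-2) * ∑ k ∈ range (K+1), (-1:ℝ)^(n-k) * (n.choose k : ℝ) := this
      _ = 2 * ∑ k ∈ range (K+1), (-1:ℝ)^(n-k+1) * (n.choose k : ℝ) := by
          rw [Finset.mul_sum, Finset.mul_sum]
          refine Finset.sum_congr rfl fun k _ => ?_
          rw [pow_succ]; ring
  -- Step 1: (n! : ℝ) * a n = T
  have hfac : (n.factorial : ℝ) * a n = T := by
    rw [ha n, hT, Finset.mul_sum]
    refine Finset.sum_congr rfl fun i hi => ?_
    have hi' : i ≤ n := by simpa [Nat.lt_succ_iff] using hi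
    have hch : ((n.choose i : ℕ) : ℝ) * (i.factorial : ℝ) * ((n-i).factorial : ℝ)
        = (n.factorial : ℝ) := by
      exact_mod_cast congrArg (Nat.cast : ℕ → ℝ)
        (Nat.choose_mul_factorial_mul_factorial hi')
    have h1 : (i.factorial : ℝ) ≠ 0 := Nat.cast_ne_zero.mpr (Nat.factorial_ne_zero i)
    have h2 : ((n-i).factorial : ℝ) ≠ 0 := Nat.cast_ne_zero.mpr (Nat.factorial_ne_zero _)
    field_simp
    rw [← hch]; ring
  -- Conclusion
  have hnfac : (n.factorial : ℝ) ≠ 0 := Nat.cast_ne_zero.mpr (Nat.factorial_ne_zero n)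
  have hrhs : ∀ k ∈ range (K+1),
      (-1:ℝ)^(n-k+1) * (n.choose k : ℝ) / (n.factorial : ℝ)
      = (-1:ℝ)^(n-k+1) / ((k.factorial : ℝ) * ((n-k).factorial : ℝ)) := by
    intro k hk
    have hk' : k ≤ n := by
      have : k ≤ K := by simpa [Nat.lt_succ_iff] using hk
      omega
    have hch : ((n.choose k : ℕ) : ℝ) * (k.factorial : ℝ) * ((n-k).factorial : ℝ)
        = (n.factorial : ℝ) := by
      exact_mod_cast congrArg (Nat.cast : ℕ → ℝ)
        (Nat.choose_mul_factorial_mul_factorial hk')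
    have h1 : (k.factorial : ℝ) ≠ 0 := Nat.cast_ne_zero.mpr (Nat.factorial_ne_zero k)
    have h2 : ((n-k).factorial : ℝ) ≠ 0 := Nat.cast_ne_zero.mpr (Nat.factorial_ne_zero _)
    field_simp
    rw [← hch]
  have := hTfinal
  rw [← hfac] at this
  have key : a n * (1 - p^n - q^n)
      = 2 * ∑ k ∈ range (K+1), (-1:ℝ)^(n-k+1) * (n.choose k : ℝ) / (n.factorial : ℝ) := by
    have := congrArg (fun z => z / (n.factorial : ℝ)) this
    calc a n * (1 - p^n - q^n)
        = (n.factorial : ℝ) * a n * (1 - p^n - q^n) / (n.factorial : ℝ) := by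
          field_simp
      _ = 2 * (∑ k ∈ range (K+1), (-1:ℝ)^(n-k+1) * (n.choose k : ℝ)) / (n.factorial : ℝ) := by
          rw [this]
      _ = 2 * ∑ k ∈ range (K+1), (-1:ℝ)^(n-k+1) * (n.choose k : ℝ) / (n.factorial : ℝ) := by
          rw [mul_div_assoc, Finset.sum_div]
  rw [key, Finset.sum_congr rfl hrhs]
end

section
/- Suppose that for every real x ≥ 0 the series ∑_{n=0}^{∞} L_n · x^n / n! converges, and define Λ(x) = e^{-x} · ∑_{n=0}^{∞} L_n · x^n / n! (the expected CRI length when the number of contending users is Poisson distributed with mean x). Then Λ satisfies the functional equation Λ(x) = 1 + Λ(p·x) + Λ((1-p)·x) - 2 · e^{-x} · ∑_{k=0}^{K} x^k / k! for every x ≥ 0. -/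
open Finset

lemma cri_L_nonneg (K : ℕ) (hK : 1 ≤ K) (p : ℝ) (hp0 : 0 < p) (hp1 : p < 1)
    (L : ℕ → ℝ)
    (hL1 : ∀ n, n ≤ K → L n = 1)
    (hL2 : ∀ n, K < n → L n = 1 + ∑ i ∈ Finset.range (n + 1),
        (n.choose i : ℝ) * p ^ i * (1 - p) ^ (n - i) * (L i + L (n - i))) :
    ∀ n, 0 ≤ L n := by
  intro n
  induction n using Nat.strong_induction_on with
  | _ n ih =>
    by_cases hn : n ≤ K
    · rw [hL1 n hn]; norm_num
    · push_neg at hn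
      have hn2 : 2 ≤ n := by omega
      have hq0 : (0:ℝ) < 1 - p := by linarith
      have hL0 : L 0 = 1 := hL1 0 (by omega)
      obtain ⟨m, rfl⟩ : ∃ m, n = m + 1 := ⟨n - 1, by omega⟩
      have heq := hL2 (m+1) hn
      rw [Finset.sum_range_succ, Finset.sum_range_succ'] at heq
      simp only [Nat.choose_self, Nat.choose_zero_right, Nat.cast_one, pow_zero,
        Nat.sub_self, Nat.sub_zero, hL0, one_mul, mul_one] at heq
      set T := ∑ i ∈ Finset.range m, ((m+1).choose (i+1) : ℝ) * p ^ (i+1) *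
        (1 - p) ^ (m + 1 - (i+1)) * (L (i+1) + L (m + 1 - (i+1))) with hT
      have hTnn : 0 ≤ T := by
        apply Finset.sum_nonneg
        intro i hi
        rw [Finset.mem_range] at hi
        have h1 : 0 ≤ L (i+1) := ih (i+1) (by omega)
        have h2 : 0 ≤ L (m + 1 - (i+1)) := ih (m + 1 - (i+1)) (by omega)
        have : (0:ℝ) ≤ ((m+1).choose (i+1) : ℝ) := by positivity
        have hp' : (0:ℝ) ≤ p ^ (i+1) := by positivity
        have hq' : (0:ℝ) ≤ (1-p) ^ (m + 1 - (i+1)) := by positivity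
        exact mul_nonneg (mul_nonneg (mul_nonneg this hp') hq') (by linarith)
      have hplt : p ^ (m+1) + (1-p) ^ (m+1) < 1 := by
        have h1 : p ^ (m+1) ≤ p ^ 2 := pow_le_pow_of_le_one hp0.le hp1.le hn2
        have h2 : (1-p) ^ (m+1) ≤ (1-p) ^ 2 := pow_le_pow_of_le_one hq0.le (by linarith) hn2
        nlinarith [mul_pos hp0 hq0]
      have hpn : (0:ℝ) ≤ p ^ (m+1) := by positivity
      have hqn : (0:ℝ) ≤ (1-p) ^ (m+1) := by positivity
      by_contra h
      push_neg at h
      have hd : (0:ℝ) < 1 - p ^ (m+1) - (1-p) ^ (m+1) := by linarith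
      have hneg : L (m+1) * (1 - p ^ (m+1) - (1-p) ^ (m+1)) < 0 :=
        mul_neg_of_neg_of_pos h hd
      nlinarith [heq, hTnn]

theorem poisson_cri_functional_equation
    (K : ℕ) (hK : 1 ≤ K) (p : ℝ) (hp0 : 0 < p) (hp1 : p < 1)
    (L : ℕ → ℝ)
    (hL1 : ∀ n, n ≤ K → L n = 1)
    (hL2 : ∀ n, K < n → L n = 1 + ∑ i ∈ Finset.range (n + 1),
        (n.choose i : ℝ) * p ^ i * (1 - p) ^ (n - i) * (L i + L (n - i)))
    (hsum : ∀ x : ℝ, 0 ≤ x → Summable (fun n : ℕ => L n * x ^ n / (n.factorial : ℝ)))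
    (Λ : ℝ → ℝ)
    (hΛ : ∀ x : ℝ, Λ x = Real.exp (-x) * ∑' n : ℕ, L n * x ^ n / (n.factorial : ℝ)) :
    ∀ x : ℝ, 0 ≤ x →
      Λ x = 1 + Λ (p * x) + Λ ((1 - p) * x)
            - 2 * Real.exp (-x) * ∑ k ∈ Finset.range (K + 1), x ^ k / (k.factorial : ℝ) := by
  intro x hx
  have hq0 : (0:ℝ) < 1 - p := by linarith
  have hLnn : ∀ n, 0 ≤ L n := cri_L_nonneg K hK p hp0 hp1 L hL1 hL2
  have hpx : 0 ≤ p * x := mul_nonneg hp0.le hx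
  have hqx : 0 ≤ (1 - p) * x := mul_nonneg hq0.le hx
  -- absolute summability of the L-series
  have hnormL : ∀ y : ℝ, 0 ≤ y →
      Summable (fun n : ℕ => ‖L n * y ^ n / (n.factorial : ℝ)‖) := by
    intro y hy
    refine (hsum y hy).congr fun n => ?_
    rw [Real.norm_of_nonneg]
    exact div_nonneg (mul_nonneg (hLnn n) (pow_nonneg hy n)) (by positivity)
  have hnormE : ∀ y : ℝ, Summable (fun n : ℕ => ‖y ^ n / (n.factorial : ℝ)‖) := by
    intro y
    refine (Real.summable_pow_div_factorial |y|).congr fun n => ?_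
    simp [Real.norm_eq_abs, abs_div, abs_pow, Nat.abs_cast]
  have hexp : ∀ y : ℝ, Real.exp y = ∑' n : ℕ, y ^ n / (n.factorial : ℝ) := by
    intro y; rw [Real.exp_eq_exp_ℝ, NormedSpace.exp_eq_tsum_div]
  -- Cauchy products
  have hf1 := hnormL (p * x) hpx
  have hg1 := hnormE ((1 - p) * x)
  have hf2 := hnormE (p * x)
  have hg2 := hnormL ((1 - p) * x) hqx
  set A : ℕ → ℝ := fun n => ∑ k ∈ Finset.range (n + 1),
      (L k * (p * x) ^ k / (k.factorial : ℝ)) *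
      (((1 - p) * x) ^ (n - k) / ((n - k).factorial : ℝ)) with hAdef
  set B : ℕ → ℝ := fun n => ∑ k ∈ Finset.range (n + 1),
      ((p * x) ^ k / (k.factorial : ℝ)) *
      (L (n - k) * ((1 - p) * x) ^ (n - k) / ((n - k).factorial : ℝ)) with hBdef
  have hC1 : (∑' n : ℕ, L n * (p * x) ^ n / (n.factorial : ℝ)) *
      (∑' n : ℕ, ((1 - p) * x) ^ n / (n.factorial : ℝ)) = ∑' n, A n :=
    tsum_mul_tsum_eq_tsum_sum_range_of_summable_norm hf1 hg1
  have hC2 : (∑' n : ℕ, (p * x) ^ n / (n.factorial : ℝ)) *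
      (∑' n : ℕ, L n * ((1 - p) * x) ^ n / (n.factorial : ℝ)) = ∑' n, B n :=
    tsum_mul_tsum_eq_tsum_sum_range_of_summable_norm hf2 hg2
  have hAsum : Summable A := (summable_norm_sum_mul_range_of_summable_norm hf1 hg1).of_norm
  have hBsum : Summable B := (summable_norm_sum_mul_range_of_summable_norm hf2 hg2).of_norm
  set χ : ℕ → ℝ := fun n => if n ≤ K then 2 * (x ^ n / (n.factorial : ℝ)) else 0 with hχdef
  have hχ0 : ∀ n ∉ Finset.range (K + 1), χ n = 0 := by
    intro n hn
    rw [Finset.mem_range] at hn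
    exact if_neg (by omega)
  have hχsum : Summable χ := summable_of_ne_finset_zero hχ0
  have hEsum : Summable (fun n : ℕ => x ^ n / (n.factorial : ℝ)) :=
    Real.summable_pow_div_factorial x
  -- the per-term identity
  have key : ∀ n : ℕ, L n * x ^ n / (n.factorial : ℝ) + χ n =
      x ^ n / (n.factorial : ℝ) + (A n + B n) := by
    intro n
    have hterm : ∀ k ∈ Finset.range (n + 1),
        (n.choose k : ℝ) * p ^ k * (1 - p) ^ (n - k) * (L k + L (n - k)) *
          (x ^ n / (n.factorial : ℝ)) =
        (L k * (p * x) ^ k / (k.factorial : ℝ)) *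
          (((1 - p) * x) ^ (n - k) / ((n - k).factorial : ℝ)) +
        ((p * x) ^ k / (k.factorial : ℝ)) *
          (L (n - k) * ((1 - p) * x) ^ (n - k) / ((n - k).factorial : ℝ)) := by
      intro k hk
      rw [Finset.mem_range] at hk
      have hkn : k ≤ n := by omega
      have hfac : ((n.factorial : ℝ)) =
          (n.choose k : ℝ) * (k.factorial : ℝ) * ((n - k).factorial : ℝ) := by
        exact_mod_cast (Nat.choose_mul_factorial_mul_factorial hkn).symm
      have hxn : x ^ n = x ^ k * x ^ (n - k) := by
        rw [← pow_add, Nat.add_sub_cancel' hkn]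
      have h0 : (n.choose k : ℝ) ≠ 0 := Nat.cast_ne_zero.2 (Nat.choose_pos hkn).ne'
      have h1 : ((k.factorial : ℝ)) ≠ 0 := Nat.cast_ne_zero.2 k.factorial_ne_zero
      have h2 : (((n - k).factorial : ℝ)) ≠ 0 := Nat.cast_ne_zero.2 (n - k).factorial_ne_zero
      rw [hxn, hfac]
      simp only [mul_pow]
      field_simp
    have hS : (∑ i ∈ Finset.range (n + 1),
        (n.choose i : ℝ) * p ^ i * (1 - p) ^ (n - i) * (L i + L (n - i))) *
        (x ^ n / (n.factorial : ℝ)) = A n + B n := by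
      rw [Finset.sum_mul, Finset.sum_congr rfl hterm, Finset.sum_add_distrib]
    by_cases hn : n ≤ K
    · have hS2 : (∑ i ∈ Finset.range (n + 1),
          (n.choose i : ℝ) * p ^ i * (1 - p) ^ (n - i) * (L i + L (n - i))) = 2 := by
        have h1 : ∀ i ∈ Finset.range (n + 1),
            (n.choose i : ℝ) * p ^ i * (1 - p) ^ (n - i) * (L i + L (n - i)) =
            2 * (p ^ i * (1 - p) ^ (n - i) * (n.choose i : ℝ)) := by
          intro i hi
          rw [Finset.mem_range] at hi
          rw [hL1 i (by omega), hL1 (n - i) (by omega)]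
          ring
        rw [Finset.sum_congr rfl h1, ← Finset.mul_sum, ← add_pow]
        norm_num
      have hAB : A n + B n = 2 * (x ^ n / (n.factorial : ℝ)) := by
        rw [← hS, hS2]
      rw [hL1 n hn]
      simp only [hχdef, if_pos hn]
      linear_combination -hAB
    · push_neg at hn
      rw [hL2 n hn]
      simp only [hχdef, if_neg (by omega : ¬ n ≤ K)]
      linear_combination hS
  -- sum everything
  have htsum : (∑' n, L n * x ^ n / (n.factorial : ℝ)) + (∑' n, χ n) =
      (∑' n : ℕ, x ^ n / (n.factorial : ℝ)) + ((∑' n, A n) + (∑' n, B n)) := by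
    rw [← Summable.tsum_add (hsum x hx) hχsum, ← Summable.tsum_add hAsum hBsum,
      ← Summable.tsum_add hEsum (hAsum.add hBsum)]
    exact tsum_congr key
  have hχval : (∑' n, χ n) = 2 * ∑ k ∈ Finset.range (K + 1), x ^ k / (k.factorial : ℝ) := by
    rw [tsum_eq_sum hχ0, Finset.mul_sum]
    refine Finset.sum_congr rfl fun k hk => ?_
    rw [Finset.mem_range] at hk
    exact if_pos (by omega)
  rw [hχval, ← hexp x] at htsum
  rw [← hexp ((1 - p) * x)] at hC1
  rw [← hexp (p * x)] at hC2
  -- assemble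
  rw [hΛ x, hΛ (p * x), hΛ ((1 - p) * x)]
  have e1 : Real.exp (-x) * Real.exp x = 1 := by
    rw [← Real.exp_add]; simp
  have e2 : Real.exp (-x) * Real.exp ((1 - p) * x) = Real.exp (-(p * x)) := by
    rw [← Real.exp_add]; ring_nf
  have e3 : Real.exp (-x) * Real.exp (p * x) = Real.exp (-((1 - p) * x)) := by
    rw [← Real.exp_add]; ring_nf
  linear_combination Real.exp (-x) * htsum - Real.exp (-x) * hC1 - Real.exp (-x) * hC2 +
    e1 + (∑' n : ℕ, L n * (p * x) ^ n / (n.factorial : ℝ)) * e2 +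
    (∑' n : ℕ, L n * ((1 - p) * x) ^ n / (n.factorial : ℝ)) * e3
end

section
/- Suppose 0 ≤ z ≤ 1 and q : ℕ → ℝ satisfies 0 ≤ q_n ≤ 1 for all n, q_n = z for all n ≤ K, and q_n = z · ∑_{i=0}^{n} C(n,i) · p^i · (1-p)^{n-i} · q_i · q_{n-i} for all n > K. Define Q(x) = e^{-x} · ∑_{n=0}^{∞} q_n · x^n / n! for x ≥ 0 (the probability generating function of the CRI length at argument z, Poisson-averaged with mean x). Then for every x ≥ 0, Q(x) = z · Q(p·x) · Q((1-p)·x) + (z - z^3) · e^{-x} · ∑_{k=0}^{K} x^k / k!. -/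
open Finset

set_option maxHeartbeats 1000000

theorem poisson_pgf_functional_equation
    (K : ℕ) (hK : 1 ≤ K) (p : ℝ) (hp0 : 0 < p) (hp1 : p < 1)
    (z : ℝ) (hz0 : 0 ≤ z) (hz1 : z ≤ 1)
    (q : ℕ → ℝ)
    (hq01 : ∀ n, 0 ≤ q n ∧ q n ≤ 1)
    (hq1 : ∀ n, n ≤ K → q n = z)
    (hq2 : ∀ n, K < n → q n = z * ∑ i ∈ Finset.range (n + 1),
        (n.choose i : ℝ) * p ^ i * (1 - p) ^ (n - i) * q i * q (n - i))
    (Q : ℝ → ℝ)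
    (hQ : ∀ x : ℝ, Q x = Real.exp (-x) * ∑' n : ℕ, q n * x ^ n / (n.factorial : ℝ)) :
    ∀ x : ℝ, 0 ≤ x →
      Q x = z * Q (p * x) * Q ((1 - p) * x)
            + (z - z ^ 3) * Real.exp (-x) *
                ∑ k ∈ Finset.range (K + 1), x ^ k / (k.factorial : ℝ) := by
  intro x hx
  have hsn : ∀ y : ℝ, Summable (fun n : ℕ => ‖q n * y ^ n / (n.factorial : ℝ)‖) := by
    intro y
    refine Summable.of_nonneg_of_le (fun n => norm_nonneg _) (fun n => ?_)
      (Real.summable_pow_div_factorial |y|)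
    rw [Real.norm_eq_abs, abs_div, abs_mul, abs_pow, Nat.abs_cast]
    gcongr
    exact mul_le_of_le_one_left (by positivity)
      (abs_le.2 ⟨by linarith [(hq01 n).1], (hq01 n).2⟩)
  set f : ℕ → ℝ := fun n => q n * (p * x) ^ n / (n.factorial : ℝ) with hf
  set g : ℕ → ℝ := fun n => q n * ((1 - p) * x) ^ n / (n.factorial : ℝ) with hg
  have hfn : Summable fun n => ‖f n‖ := hsn (p * x)
  have hgn : Summable fun n => ‖g n‖ := hsn ((1 - p) * x)
  have hcauchy : ((∑' n, f n) * ∑' n, g n)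
      = ∑' n, ∑ k ∈ range (n + 1), f k * g (n - k) :=
    tsum_mul_tsum_eq_tsum_sum_range_of_summable_norm hfn hgn
  have hterm : ∀ n : ℕ, ∀ i ∈ range (n + 1),
      f i * g (n - i) = (n.choose i : ℝ) * p ^ i * (1 - p) ^ (n - i) * q i * q (n - i)
        * (x ^ n / (n.factorial : ℝ)) := by
    intro n i hi
    rw [mem_range, Nat.lt_succ_iff] at hi
    have hchoose : (n.choose i : ℝ)
        = (n.factorial : ℝ) / ((i.factorial : ℝ) * ((n - i).factorial : ℝ)) :=
      Nat.cast_choose ℝ hi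
    have hx' : x ^ i * x ^ (n - i) = x ^ n := by
      rw [← pow_add, Nat.add_sub_cancel' hi]
    have h1 : (0:ℝ) < (i.factorial : ℝ) := by exact_mod_cast i.factorial_pos
    have h2 : (0:ℝ) < ((n - i).factorial : ℝ) := by exact_mod_cast (n - i).factorial_pos
    have h3 : (0:ℝ) < (n.factorial : ℝ) := by exact_mod_cast n.factorial_pos
    simp only [hf, hg, mul_pow]
    rw [hchoose, ← hx']
    field_simp
  have hS : ∀ n : ℕ, ∑ k ∈ range (n + 1), f k * g (n - k)
      = (∑ i ∈ range (n + 1), (n.choose i : ℝ) * p ^ i * (1 - p) ^ (n - i) * q i * q (n - i))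
        * (x ^ n / (n.factorial : ℝ)) := by
    intro n
    rw [sum_mul]
    exact sum_congr rfl (hterm n)
  set h : ℕ → ℝ := fun n => if n ≤ K then (z - z ^ 3) * (x ^ n / (n.factorial : ℝ)) else 0 with hh
  have hpoint : ∀ n : ℕ, q n * x ^ n / (n.factorial : ℝ)
      = z * (∑ k ∈ range (n + 1), f k * g (n - k)) + h n := by
    intro n
    rw [hS n]
    by_cases hn : n ≤ K
    · have hqsum : ∑ i ∈ range (n + 1), (n.choose i : ℝ) * p ^ i * (1 - p) ^ (n - i)
          * q i * q (n - i)
          = z ^ 2 * ∑ i ∈ range (n + 1), (n.choose i : ℝ) * p ^ i * (1 - p) ^ (n - i) := by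
        rw [mul_sum]
        refine sum_congr rfl fun i hi => ?_
        rw [mem_range, Nat.lt_succ_iff] at hi
        rw [hq1 i (hi.trans hn), hq1 (n - i) ((Nat.sub_le n i).trans hn)]
        ring
      have hbin : ∑ i ∈ range (n + 1), (n.choose i : ℝ) * p ^ i * (1 - p) ^ (n - i) = 1 := by
        have h := add_pow p (1 - p) n
        simp only [add_sub_cancel, one_pow] at h
        conv_rhs => rw [h]
        exact sum_congr rfl fun i _ => by ring
      rw [hqsum, hbin, hq1 n hn]
      simp only [hh, if_pos hn]
      ring
    · simp only [hh, if_neg hn]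
      rw [hq2 n (lt_of_not_ge hn)]
      ring
  -- summability facts
  have hfs : Summable f := hfn.of_norm
  have hgs : Summable g := hgn.of_norm
  have hSsum : Summable fun n => ∑ k ∈ range (n + 1), f k * g (n - k) :=
    (summable_norm_sum_mul_range_of_summable_norm hfn hgn).of_norm
  have hhsum : Summable h := by
    apply summable_of_ne_finset_zero (s := range (K + 1))
    intro n hn
    rw [mem_range, Nat.lt_succ_iff] at hn
    simp [hh, hn]
  have hhts : ∑' n, h n = (z - z ^ 3) * ∑ k ∈ range (K + 1), x ^ k / (k.factorial : ℝ) := by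
    rw [tsum_eq_sum (s := range (K + 1)) (by
      intro n hn
      rw [mem_range, Nat.lt_succ_iff] at hn
      simp [hh, hn]), mul_sum]
    refine sum_congr rfl fun k hk => ?_
    rw [mem_range, Nat.lt_succ_iff] at hk
    simp [hh, hk]
  have hmain : ∑' n, q n * x ^ n / (n.factorial : ℝ)
      = z * ((∑' n, f n) * ∑' n, g n)
        + (z - z ^ 3) * ∑ k ∈ range (K + 1), x ^ k / (k.factorial : ℝ) := by
    rw [hcauchy, ← hhts, ← tsum_mul_left, ← Summable.tsum_add (hSsum.mul_left z) hhsum]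
    exact tsum_congr hpoint
  -- put everything together
  rw [hQ x, hQ (p * x), hQ ((1 - p) * x), hmain]
  have hexp : Real.exp (-(p * x)) * Real.exp (-((1 - p) * x)) = Real.exp (-x) := by
    rw [← Real.exp_add]; ring_nf
  rw [← hexp]
  ring
end

section
/- Define f(x, k, z) = x·z - 1 + ∑_{i=0}^{k} (L_i - x·i + 1) · (z^i / i!) · e^{-z}. Let m ≥ K be an integer and let α, β be real numbers such that α·n - 1 ≤ L_n ≤ β·n - 1 for every integer n > m, and suppose that for every real z ≥ 0 the series ∑_{n=0}^{∞} L_n · z^n / n! converges. Then for every real z ≥ 0, the Poisson-averaged expected CRI length Λ(z) = e^{-z} · ∑_{n=0}^{∞} L_n · z^n / n! satisfies f(α, m, z) ≤ Λ(z) ≤ f(β, m, z). -/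
open Finset

-- helper lemmas
lemma exp_tsum' (w : ℝ) : ∑' n : ℕ, w ^ n / (n.factorial : ℝ) = Real.exp w := by
  rw [Real.exp_eq_exp_ℝ, NormedSpace.exp_eq_tsum_div]

lemma succ_term (z : ℝ) (n : ℕ) :
    ((n+1 : ℕ) : ℝ) * z ^ (n+1) / ((n+1).factorial : ℝ) = z * (z ^ n / (n.factorial : ℝ)) := by
  rw [Nat.factorial_succ]
  push_cast
  have h : (n.factorial : ℝ) ≠ 0 := Nat.cast_ne_zero.mpr n.factorial_ne_zero
  field_simp
  ring

lemma summable_n_pow (z : ℝ) : Summable (fun n : ℕ => (n : ℝ) * z ^ n / (n.factorial : ℝ)) := by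
  rw [← summable_nat_add_iff 1]
  simp only [succ_term]
  exact (Real.summable_pow_div_factorial z).mul_left z

lemma tsum_n_pow (z : ℝ) :
    ∑' n : ℕ, (n : ℝ) * z ^ n / (n.factorial : ℝ) = z * Real.exp z := by
  rw [Summable.tsum_eq_zero_add (summable_n_pow z)]
  simp only [Nat.cast_zero, zero_mul, zero_div, zero_add]
  have : ∀ n : ℕ, ((n+1 : ℕ) : ℝ) * z ^ (n+1) / ((n+1).factorial : ℝ)
      = z * (z ^ n / (n.factorial : ℝ)) := succ_term z
  rw [show (fun n : ℕ => ((n+1 : ℕ) : ℝ) * z ^ (n+1) / ((n+1).factorial : ℝ))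
      = fun n : ℕ => z * (z ^ n / (n.factorial : ℝ)) from funext (succ_term z),
    tsum_mul_left, exp_tsum']

lemma summable_q (x z : ℝ) :
    Summable (fun n : ℕ => (x * (n : ℝ) - 1) * z ^ n / (n.factorial : ℝ)) := by
  have : (fun n : ℕ => (x * (n : ℝ) - 1) * z ^ n / (n.factorial : ℝ))
      = fun n : ℕ => x * ((n : ℝ) * z ^ n / (n.factorial : ℝ)) - z ^ n / (n.factorial : ℝ) := by
    funext n; ring
  rw [this]
  exact ((summable_n_pow z).mul_left x).sub (Real.summable_pow_div_factorial z)

lemma tsum_q (x z : ℝ) :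
    ∑' n : ℕ, (x * (n : ℝ) - 1) * z ^ n / (n.factorial : ℝ)
      = x * (z * Real.exp z) - Real.exp z := by
  have h : (fun n : ℕ => (x * (n : ℝ) - 1) * z ^ n / (n.factorial : ℝ))
      = fun n : ℕ => x * ((n : ℝ) * z ^ n / (n.factorial : ℝ)) - z ^ n / (n.factorial : ℝ) := by
    funext n; ring
  rw [h, Summable.tsum_sub ((summable_n_pow z).mul_left x) (Real.summable_pow_div_factorial z),
    tsum_mul_left, tsum_n_pow, exp_tsum']

set_option maxHeartbeats 1000000 in
theorem poisson_cri_length_bounds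
    (K : ℕ) (hK : 1 ≤ K)
    (L : ℕ → ℝ)
    (hL1 : ∀ n, n ≤ K → L n = 1)
    (hL2 : ∀ n, K < n → L n = 1 + ∑ i ∈ Finset.range (n + 1),
        (n.choose i : ℝ) * (1 / 2 : ℝ) ^ i * (1 - (1 / 2 : ℝ)) ^ (n - i) * (L i + L (n - i)))
    (f : ℝ → ℕ → ℝ → ℝ)
    (hf : ∀ x k z, f x k z = x * z - 1 +
        ∑ i ∈ Finset.range (k + 1),
          (L i - x * (i : ℝ) + 1) * (z ^ i / (i.factorial : ℝ)) * Real.exp (-z))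
    (m : ℕ) (hm : K ≤ m)
    (α β : ℝ)
    (hαβ : ∀ n : ℕ, m < n → α * (n : ℝ) - 1 ≤ L n ∧ L n ≤ β * (n : ℝ) - 1)
    (hsum : ∀ z : ℝ, 0 ≤ z → Summable (fun n : ℕ => L n * z ^ n / (n.factorial : ℝ)))
    (Λ : ℝ → ℝ)
    (hΛ : ∀ z : ℝ, Λ z = Real.exp (-z) * ∑' n : ℕ, L n * z ^ n / (n.factorial : ℝ)) :
    ∀ z : ℝ, 0 ≤ z → f α m z ≤ Λ z ∧ Λ z ≤ f β m z := by
  intro z hz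
  set g : ℕ → ℝ := fun n => L n * z ^ n / (n.factorial : ℝ) with hg
  have hgs : Summable g := hsum z hz
  have hgsplit := hgs.sum_add_tsum_nat_add (m + 1)
  have hEE : Real.exp (-z) * Real.exp z = 1 := by
    rw [← Real.exp_add]; simp
  have hEpos : 0 ≤ Real.exp (-z) := (Real.exp_pos _).le
  -- key identity for f
  have key : ∀ x : ℝ, f x m z = Real.exp (-z) *
      (∑ i ∈ Finset.range (m + 1), g i +
        ∑' i : ℕ, (x * ((i + (m+1) : ℕ) : ℝ) - 1) * z ^ (i + (m+1)) / ((i + (m+1)).factorial : ℝ)) := by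
    intro x
    have hqsplit := (summable_q x z).sum_add_tsum_nat_add (m + 1)
    have htail : (∑' i : ℕ, (x * ((i + (m+1) : ℕ) : ℝ) - 1) * z ^ (i + (m+1)) / ((i + (m+1)).factorial : ℝ))
        = (x * (z * Real.exp z) - Real.exp z)
          - ∑ i ∈ Finset.range (m + 1), (x * (i : ℝ) - 1) * z ^ i / (i.factorial : ℝ) := by
      rw [← tsum_q x z]; push_cast at hqsplit ⊢; linarith
    rw [hf, htail]
    have hterm : ∀ i ∈ Finset.range (m+1),
        (L i - x * (i : ℝ) + 1) * (z ^ i / (i.factorial : ℝ)) * Real.exp (-z)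
          = Real.exp (-z) * (g i - (x * (i : ℝ) - 1) * z ^ i / (i.factorial : ℝ)) := by
      intro i _; simp only [hg]; ring
    rw [Finset.sum_congr rfl hterm, ← Finset.mul_sum, Finset.sum_sub_distrib]
    set A := ∑ i ∈ Finset.range (m + 1), g i
    set B := ∑ i ∈ Finset.range (m + 1), (x * (i : ℝ) - 1) * z ^ i / (i.factorial : ℝ)
    linear_combination (1 - x * z) * hEE
  -- tail comparison
  have hΛeq : Λ z = Real.exp (-z) * (∑ i ∈ Finset.range (m + 1), g i
      + ∑' i : ℕ, g (i + (m+1))) := by rw [hΛ, hgsplit]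
  have hgtail : Summable (fun i : ℕ => g (i + (m+1))) := (summable_nat_add_iff (m+1)).mpr hgs
  have hqtail : ∀ x : ℝ, Summable (fun i : ℕ =>
      (x * ((i + (m+1) : ℕ) : ℝ) - 1) * z ^ (i + (m+1)) / ((i + (m+1)).factorial : ℝ)) :=
    fun x => (summable_nat_add_iff (m+1)).mpr (summable_q x z)
  have hpt : ∀ (i : ℕ), 0 ≤ z ^ (i + (m+1)) / (((i + (m+1)).factorial : ℕ) : ℝ) := by
    intro i
    exact div_nonneg (pow_nonneg hz _) (Nat.cast_nonneg _)
  constructor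
  · rw [key α, hΛeq]
    apply mul_le_mul_of_nonneg_left _ hEpos
    apply add_le_add_right
    apply Summable.tsum_le_tsum _ (hqtail α) hgtail
    intro i
    have hlt : m < i + (m+1) := by omega
    have h1 := (hαβ _ hlt).1
    have := mul_le_mul_of_nonneg_right h1 (hpt i)
    simp only [hg]
    calc (α * ((i + (m+1) : ℕ) : ℝ) - 1) * z ^ (i + (m+1)) / ((i + (m+1)).factorial : ℝ)
        = (α * ((i + (m+1) : ℕ) : ℝ) - 1) * (z ^ (i + (m+1)) / ((i + (m+1)).factorial : ℝ)) := by ring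
      _ ≤ L (i + (m+1)) * (z ^ (i + (m+1)) / ((i + (m+1)).factorial : ℝ)) := this
      _ = L (i + (m+1)) * z ^ (i + (m+1)) / ((i + (m+1)).factorial : ℝ) := by ring
  · rw [key β, hΛeq]
    apply mul_le_mul_of_nonneg_left _ hEpos
    apply add_le_add_right
    apply Summable.tsum_le_tsum _ hgtail (hqtail β)
    intro i
    have hlt : m < i + (m+1) := by omega
    have h2 := (hαβ _ hlt).2
    have := mul_le_mul_of_nonneg_right h2 (hpt i)
    simp only [hg]
    calc L (i + (m+1)) * z ^ (i + (m+1)) / ((i + (m+1)).factorial : ℝ)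
        = L (i + (m+1)) * (z ^ (i + (m+1)) / ((i + (m+1)).factorial : ℝ)) := by ring
      _ ≤ (β * ((i + (m+1) : ℕ) : ℝ) - 1) * (z ^ (i + (m+1)) / ((i + (m+1)).factorial : ℝ)) := this
      _ = (β * ((i + (m+1) : ℕ) : ℝ) - 1) * z ^ (i + (m+1)) / ((i + (m+1)).factorial : ℝ) := by ring
end
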